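/- arXiv:2601.06913 — 12 statements merged into one kernel-verified Lean document; each statement's English description precedes it below -/
import Mathlib

section
/- Reverse Lipschitzness of the MNL model: Let d ≥ 1, let C > 0, and let A = {a ∈ ℝ^d : ‖a‖₂ ≤ C} be the closed Euclidean ball of radius C. Define h : ℝ^d → ℝ^d by h_i(a) = exp(a_i) / (1 + ∑_{j=1}^d exp(a_j)) for each i ∈ {1,…,d}. Let κ₀ > 0 be any constant such that h_i(a) · (1 − ∑_{j=1}^d h_j(a)) ≥ κ₀ for every a ∈ A and every i ∈ {1,…,d}. Then for all a, b ∈ A, ‖h(a) − h(b)‖₂ ≥ κ₀ ‖a − b‖₂. -/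
set_option maxHeartbeats 1000000


open Matrix

open Finset in
private lemma mnl_key_ineq {d : ℕ} (κ₀ : ℝ) (q v : Fin d → ℝ) (hq : ∀ i, 0 ≤ q i)
    (hκ : ∀ i, κ₀ ≤ q i * (1 - ∑ j, q j)) :
    κ₀ * ∑ i, v i ^ 2 ≤ ∑ i, q i * v i ^ 2 - (∑ i, q i * v i) ^ 2 := by
  have cs : (∑ i, q i * v i) ^ 2 ≤ (∑ i, q i) * ∑ i, q i * v i ^ 2 := by
    have h1 : ∀ i, q i * v i = Real.sqrt (q i) * (Real.sqrt (q i) * v i) := by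
      intro i
      rw [← mul_assoc, Real.mul_self_sqrt (hq i)]
    have h2 := sum_mul_sq_le_sq_mul_sq Finset.univ (fun i => Real.sqrt (q i))
      (fun i => Real.sqrt (q i) * v i)
    calc (∑ i, q i * v i) ^ 2
        = (∑ i, Real.sqrt (q i) * (Real.sqrt (q i) * v i)) ^ 2 := by
          congr 1; exact Finset.sum_congr rfl fun i _ => h1 i
      _ ≤ (∑ i, Real.sqrt (q i) ^ 2) * ∑ i, (Real.sqrt (q i) * v i) ^ 2 := h2
      _ = (∑ i, q i) * ∑ i, q i * v i ^ 2 := by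
          congr 1
          · exact Finset.sum_congr rfl fun i _ => Real.sq_sqrt (hq i)
          · refine Finset.sum_congr rfl fun i _ => ?_
            rw [mul_pow, Real.sq_sqrt (hq i)]
  have step1 : κ₀ * ∑ i, v i ^ 2 ≤ (1 - ∑ j, q j) * ∑ i, q i * v i ^ 2 := by
    rw [Finset.mul_sum, Finset.mul_sum]
    refine Finset.sum_le_sum fun i _ => ?_
    have := mul_le_mul_of_nonneg_right (hκ i) (sq_nonneg (v i))
    nlinarith [this]
  nlinarith [step1, cs]

/-- **Reverse Lipschitzness of the MNL model.**
For `d ≥ 1`, `C > 0`, and `h` the multinomial-logit map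
`h_i(a) = exp(a_i) / (1 + ∑_j exp(a_j))`, if `κ₀ > 0` satisfies
`h_i(a) * (1 - ∑_j h_j(a)) ≥ κ₀` for every `a` in the closed Euclidean ball
of radius `C` and every coordinate `i`, then `h` is reverse-Lipschitz with
constant `κ₀` on that ball. -/
theorem reverse_lipschitz_mnl
    (d : ℕ) (hd : 1 ≤ d) (C : ℝ) (hC : 0 < C)
    (h : EuclideanSpace ℝ (Fin d) → EuclideanSpace ℝ (Fin d))
    (hh : ∀ (a : EuclideanSpace ℝ (Fin d)) (i : Fin d),
      h a i = Real.exp (a i) / (1 + ∑ j, Real.exp (a j)))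
    (κ₀ : ℝ) (hκpos : 0 < κ₀)
    (hκ : ∀ a : EuclideanSpace ℝ (Fin d), ‖a‖ ≤ C →
      ∀ i : Fin d, κ₀ ≤ h a i * (1 - ∑ j, h a j))
    (a b : EuclideanSpace ℝ (Fin d)) (ha : ‖a‖ ≤ C) (hb : ‖b‖ ≤ C) :
    κ₀ * ‖a - b‖ ≤ ‖h a - h b‖ := by
  set v : EuclideanSpace ℝ (Fin d) := a - b with hv
  -- the curve c t = b + t • v
  set c : ℝ → EuclideanSpace ℝ (Fin d) := fun t => b + t • v with hc
  have hcapp : ∀ t i, c t i = b i + t * v i := by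
    intro t i
    simp [hc, PiLp.add_apply, PiLp.smul_apply, smul_eq_mul]
  -- S and its positivity
  set S : ℝ → ℝ := fun t => 1 + ∑ j, Real.exp (b j + t * v j) with hS
  have hSpos : ∀ t, 0 < S t := by
    intro t
    have : 0 ≤ ∑ j, Real.exp (b j + t * v j) :=
      Finset.sum_nonneg fun j _ => (Real.exp_pos _).le
    simp only [hS]; linarith
  set S' : ℝ → ℝ := fun t => ∑ j, Real.exp (b j + t * v j) * v j with hS'
  -- F t = ⟪h (c t), v⟫ written coordinatewise
  set F : ℝ → ℝ := fun t => ∑ i, v i * (Real.exp (b i + t * v i) / S t) with hF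
  set D : ℝ → ℝ := fun t => ∑ i, v i *
    ((Real.exp (b i + t * v i) * v i * S t - Real.exp (b i + t * v i) * S' t) / (S t) ^ 2)
    with hD
  have hderiv : ∀ t : ℝ, HasDerivAt F (D t) t := by
    intro t
    refine HasDerivAt.fun_sum fun i _ => ?_
    refine HasDerivAt.const_mul (v i) ?_
    have hei : HasDerivAt (fun t => Real.exp (b i + t * v i))
        (Real.exp (b i + t * v i) * v i) t := by
      have : HasDerivAt (fun t : ℝ => b i + t * v i) (v i) t :=
        (hasDerivAt_mul_const (v i)).const_add (b i)
      exact this.exp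
    have hSs : HasDerivAt S (S' t) t := by
      refine HasDerivAt.const_add 1 ?_
      refine HasDerivAt.fun_sum fun j _ => ?_
      have : HasDerivAt (fun t : ℝ => b j + t * v j) (v j) t :=
        (hasDerivAt_mul_const (v j)).const_add (b j)
      exact this.exp
    exact hei.div hSs (hSpos t).ne'
  -- norm of c t
  have hcball : ∀ t ∈ Set.Icc (0:ℝ) 1, ‖c t‖ ≤ C := by
    intro t ht
    have heq : c t = (1 - t) • b + t • a := by
      simp only [hc, hv]; module
    rw [heq]
    calc ‖(1 - t) • b + t • a‖ ≤ ‖(1 - t) • b‖ + ‖t • a‖ := norm_add_le _ _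
      _ = (1 - t) * ‖b‖ + t * ‖a‖ := by
          rw [norm_smul, norm_smul, Real.norm_eq_abs, Real.norm_eq_abs,
            abs_of_nonneg (by linarith [ht.2]), abs_of_nonneg ht.1]
      _ ≤ (1 - t) * C + t * C := by
          have h1 : (0:ℝ) ≤ 1 - t := by linarith [ht.2]
          have := mul_le_mul_of_nonneg_left hb h1
          have := mul_le_mul_of_nonneg_left ha ht.1
          linarith
      _ = C := by ring
  -- key derivative lower bound on [0,1]
  set K : ℝ := ∑ i, v i ^ 2 with hK
  have hDlb : ∀ t ∈ Set.Icc (0:ℝ) 1, κ₀ * K ≤ D t := by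
    intro t ht
    set q : Fin d → ℝ := fun i => Real.exp (b i + t * v i) / S t with hq
    have hqh : ∀ i, h (c t) i = q i := by
      intro i
      rw [hh]
      simp only [hcapp, hq, hS]
    have hq0 : ∀ i, 0 ≤ q i := fun i => div_nonneg (Real.exp_pos _).le (hSpos t).le
    have hκ' : ∀ i, κ₀ ≤ q i * (1 - ∑ j, q j) := by
      intro i
      have := hκ (c t) (hcball t ht) i
      rw [hqh i] at this
      convert this using 3
      exact (Finset.sum_congr rfl fun j _ => (hqh j).symm)
    have key := mnl_key_ineq κ₀ q v hq0 hκ'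
    have hDeq : D t = ∑ i, q i * v i ^ 2 - (∑ i, q i * v i) ^ 2 := by
      have hSne : S t ≠ 0 := (hSpos t).ne'
      have hterm : ∀ i, v i *
          ((Real.exp (b i + t * v i) * v i * S t - Real.exp (b i + t * v i) * S' t) / (S t) ^ 2)
          = q i * v i ^ 2 - (q i * v i) * (S' t / S t) := by
        intro i
        simp only [hq]
        field_simp
      have hratio : S' t / S t = ∑ j, q j * v j := by
        simp only [hS', hq, Finset.sum_div]
        refine Finset.sum_congr rfl fun j _ => ?_
        field_simp
      simp only [hD, hterm, hratio]
      rw [Finset.sum_sub_distrib, ← Finset.sum_mul]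
      ring
    rw [hDeq]
    exact key
  -- monotonicity argument: G t = F t - κ₀ K t is monotone on [0,1]
  set G : ℝ → ℝ := fun t => F t - κ₀ * K * t with hG
  have hGderiv : ∀ t : ℝ, HasDerivAt G (D t - κ₀ * K) t := by
    intro t
    have hlin : HasDerivAt (fun t : ℝ => κ₀ * K * t) (κ₀ * K) t := by
      simpa using (hasDerivAt_id t).const_mul (κ₀ * K)
    exact (hderiv t).sub hlin
  have hmono : MonotoneOn G (Set.Icc 0 1) := by
    refine monotoneOn_of_deriv_nonneg (convex_Icc 0 1) ?_ ?_ ?_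
    · exact fun t _ => ((hGderiv t).continuousAt.continuousWithinAt)
    · intro t ht
      exact ((hGderiv t).differentiableAt).differentiableWithinAt
    · intro t ht
      rw [interior_Icc] at ht
      rw [(hGderiv t).deriv]
      have := hDlb t ⟨ht.1.le, ht.2.le⟩
      linarith
  have hG01 : G 0 ≤ G 1 := hmono (by norm_num) (by norm_num) zero_le_one
  -- translate back
  have hF0 : F 0 = ∑ i, v i * h b i := by
    simp only [hF]
    refine Finset.sum_congr rfl fun i _ => ?_
    rw [hh b i]
    norm_num [hS]
  have hvab : ∀ j, b j + 1 * v j = a j := by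
    intro j
    have : v j = a j - b j := by simp [hv]
    rw [this]; ring
  have hF1 : F 1 = ∑ i, v i * h a i := by
    simp only [hF, hS, hvab]
    refine Finset.sum_congr rfl fun i _ => ?_
    rw [hh a i]
  have hinner : κ₀ * K ≤ ∑ i, (h a - h b) i * v i := by
    have : κ₀ * K ≤ F 1 - F 0 := by
      simp only [hG] at hG01
      linarith [hG01]
    rw [hF1, hF0] at this
    calc κ₀ * K ≤ ∑ i, v i * h a i - ∑ i, v i * h b i := this
      _ = ∑ i, (h a - h b) i * v i := by
          rw [← Finset.sum_sub_distrib]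
          refine Finset.sum_congr rfl fun i _ => ?_
          simp [PiLp.sub_apply]; ring
  have hKnorm : K = ‖v‖ ^ 2 := by
    rw [← real_inner_self_eq_norm_sq]
    simp only [hK, PiLp.inner_apply, RCLike.inner_apply, conj_trivial]
    exact Finset.sum_congr rfl fun i _ => (sq (v i)) ▸ by ring
  have hCS : ∑ i, (h a - h b) i * v i ≤ ‖h a - h b‖ * ‖v‖ := by
    have := real_inner_le_norm (h a - h b) v
    simpa [PiLp.inner_apply, RCLike.inner_apply, conj_trivial, mul_comm] using this
  have hfinal : κ₀ * ‖v‖ ^ 2 ≤ ‖h a - h b‖ * ‖v‖ := by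
    rw [← hKnorm]; linarith
  rcases eq_or_lt_of_le (norm_nonneg v) with hz | hz
  · rw [hv] at hz ⊢
    rw [← hz]
    simp [norm_nonneg]
  · have := (mul_le_mul_iff_of_pos_right hz).mp (by nlinarith [hfinal] : (κ₀ * ‖v‖) * ‖v‖ ≤ ‖h a - h b‖ * ‖v‖)
    rwa [hv] at this
end

section
/- Let K ≥ 1, let p ∈ ℝ^K satisfy p_i ≥ 0 for all i and ∑_{i=1}^K p_i ≤ 1, let g_1, …, g_K ∈ ℝ^n be arbitrary vectors, and let κ ≥ 0 satisfy κ ≤ p_i (1 − ∑_{j=1}^K p_j) for every i ∈ {1,…,K}. Then, in the Loewner order on symmetric n×n matrices, ∑_{i=1}^K p_i g_i g_iᵀ − (∑_{i=1}^K p_i g_i)(∑_{i=1}^K p_i g_i)ᵀ ⪰ κ ∑_{i=1}^K g_i g_iᵀ. -/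
open Matrix


lemma scalar_key {K : ℕ} (p : Fin K → ℝ) (hp : ∀ i, 0 ≤ p i) (hq : ∑ i, p i ≤ 1)
    (κ : ℝ) (hκ : ∀ i, κ ≤ p i * (1 - ∑ j, p j)) (a : Fin K → ℝ) :
    κ * ∑ i, (a i)^2 + (∑ i, p i * a i)^2 ≤ ∑ i, p i * (a i)^2 := by
  set S := ∑ j, p j with hS
  have hS0 : 0 ≤ S := Finset.sum_nonneg fun i _ => hp i
  have cs : (∑ i, p i * a i)^2 ≤ S * ∑ i, p i * (a i)^2 := by
    have h := Finset.sum_mul_sq_le_sq_mul_sq Finset.univ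
      (fun i => Real.sqrt (p i)) (fun i => Real.sqrt (p i) * a i)
    have e1 : ∀ i : Fin K, Real.sqrt (p i) * (Real.sqrt (p i) * a i) = p i * a i := by
      intro i; rw [← mul_assoc, Real.mul_self_sqrt (hp i)]
    have e2 : ∀ i : Fin K, (Real.sqrt (p i))^2 = p i := fun i => Real.sq_sqrt (hp i)
    have e3 : ∀ i : Fin K, (Real.sqrt (p i) * a i)^2 = p i * (a i)^2 := by
      intro i; rw [mul_pow, e2]
    simp only [e1, e2, e3] at h
    exact h
  have h1 : κ * ∑ i, (a i)^2 ≤ (1 - S) * ∑ i, p i * (a i)^2 := by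
    rw [Finset.mul_sum, Finset.mul_sum]
    apply Finset.sum_le_sum
    intro i _
    calc κ * (a i)^2 ≤ (p i * (1 - S)) * (a i)^2 :=
          mul_le_mul_of_nonneg_right (hκ i) (sq_nonneg _)
      _ = (1 - S) * (p i * (a i)^2) := by ring
  nlinarith [cs, h1]

lemma sum_mulVec' {K n : ℕ} (M : Fin K → Matrix (Fin n) (Fin n) ℝ) (x : Fin n → ℝ) :
    (∑ i, M i) *ᵥ x = ∑ i, M i *ᵥ x := by
  ext j
  simp [Matrix.mulVec, dotProduct, Finset.sum_apply, Matrix.sum_apply, Finset.sum_mul]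
  rw [Finset.sum_comm]

lemma dotProduct_sum' {K n : ℕ} (x : Fin n → ℝ) (f : Fin K → (Fin n → ℝ)) :
    x ⬝ᵥ (∑ i, f i) = ∑ i, x ⬝ᵥ f i := by
  simp only [dotProduct, Finset.sum_apply, Finset.mul_sum]
  rw [Finset.sum_comm]

lemma quad_vecMulVec {n : ℕ} (v w x : Fin n → ℝ) :
    x ⬝ᵥ (Matrix.vecMulVec v w *ᵥ x) = (x ⬝ᵥ v) * (w ⬝ᵥ x) := by
  simp [dotProduct, Matrix.mulVec, Matrix.vecMulVec_apply, Finset.mul_sum,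
    Finset.sum_mul]
  rw [Finset.sum_comm]
  exact Finset.sum_congr rfl fun i _ => Finset.sum_congr rfl fun j _ => by ring


/-- Hessian-type lower bound for the multinomial-logit negative log-likelihood:
for nonnegative weights `p` with `∑ p_i ≤ 1`, vectors `g_1, …, g_K ∈ ℝ^n`, and
`0 ≤ κ ≤ p_i (1 − ∑_j p_j)` for all `i`,
`∑_i p_i g_i g_iᵀ − (∑_i p_i g_i)(∑_i p_i g_i)ᵀ ⪰ κ ∑_i g_i g_iᵀ`
in the Loewner order. -/
theorem mnl_hessian_lower_bound
    (K n : ℕ) (hK : 1 ≤ K) (p : Fin K → ℝ) (hp : ∀ i, 0 ≤ p i)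
    (hq : ∑ i, p i ≤ 1) (g : Fin K → (Fin n → ℝ))
    (κ : ℝ) (hκ0 : 0 ≤ κ) (hκ : ∀ i, κ ≤ p i * (1 - ∑ j, p j)) :
    ((∑ i, p i • Matrix.vecMulVec (g i) (g i))
      - Matrix.vecMulVec (∑ i, p i • g i) (∑ i, p i • g i)
      - κ • ∑ i, Matrix.vecMulVec (g i) (g i)).PosSemidef := by
  rw [Matrix.posSemidef_iff_dotProduct_mulVec]
  constructor
  · have hvm : ∀ v : Fin n → ℝ, (Matrix.vecMulVec v v)ᴴ = Matrix.vecMulVec v v := by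
      intro v; ext i j; simp [Matrix.vecMulVec_apply, mul_comm]
    have hvm' : ∀ v : Fin n → ℝ, (Matrix.vecMulVec v v)ᵀ = Matrix.vecMulVec v v := by
      intro v; ext i j; simp [Matrix.vecMulVec_apply, mul_comm]
    show _ᴴ = _
    simp [Matrix.conjTranspose_sub, Matrix.conjTranspose_smul, Matrix.conjTranspose_sum,
      Matrix.transpose_sum, Matrix.transpose_smul, Matrix.transpose_sub, hvm, hvm']
  · intro x
    simp only [star_trivial]
    have key := scalar_key p hp hq κ hκ (fun i => x ⬝ᵥ g i)
    rw [Matrix.sub_mulVec, Matrix.sub_mulVec, dotProduct_sub, dotProduct_sub,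
      sum_mulVec', Matrix.smul_mulVec, dotProduct_sum',
      dotProduct_smul, quad_vecMulVec]
    have e1 : ∀ i : Fin K, x ⬝ᵥ ((p i • Matrix.vecMulVec (g i) (g i)) *ᵥ x)
        = p i * (x ⬝ᵥ g i)^2 := by
      intro i
      rw [Matrix.smul_mulVec, dotProduct_smul, quad_vecMulVec,
        dotProduct_comm (g i) x, smul_eq_mul, sq]
    have e2 : x ⬝ᵥ (∑ i, p i • g i) = ∑ i, p i * (x ⬝ᵥ g i) := by
      rw [dotProduct_sum']
      exact Finset.sum_congr rfl fun i _ => by rw [dotProduct_smul]; rfl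
    have e3 : (∑ i, p i • g i) ⬝ᵥ x = ∑ i, p i * (x ⬝ᵥ g i) := by
      rw [dotProduct_comm]; exact e2
    have e4 : ∀ i : Fin K, x ⬝ᵥ (Matrix.vecMulVec (g i) (g i) *ᵥ x)
        = (x ⬝ᵥ g i)^2 := by
      intro i
      rw [quad_vecMulVec, dotProduct_comm (g i) x, sq]
    simp only [sum_mulVec', dotProduct_sum', dotProduct_smul, smul_eq_mul,
      e1, e3, e4]
    nlinarith [key]
end

section
/- Let λ > 0 and d ≥ 1, and for s = 1, …, n let G_s be a real d × k_s matrix (the k_s may differ across s). Set V := λ I_d + ∑_{s=1}^n G_s G_sᵀ. Then ∑_{s=1}^n λ_max(G_sᵀ V^{-1} G_s) ≤ d, where λ_max(M) denotes the largest eigenvalue of the symmetric positive semidefinite matrix M. -/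
open Matrix

/-- The largest eigenvalue of a symmetric positive semidefinite real matrix,
expressed as the supremum of its Rayleigh quotient over the Euclidean unit
sphere. -/
noncomputable def lambdaMax {k : ℕ} (M : Matrix (Fin k) (Fin k) ℝ) : ℝ :=
  sSup {r : ℝ | ∃ x : Fin k → ℝ, (∑ i, (x i) ^ 2) = 1 ∧ r = x ⬝ᵥ M.mulVec x}

lemma psd_trace_nonneg {k : ℕ} {M : Matrix (Fin k) (Fin k) ℝ} (hM : M.PosSemidef) :
    0 ≤ M.trace := by
  rw [Matrix.trace]
  refine Finset.sum_nonneg fun i _ => ?_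
  have := hM.dotProduct_mulVec_nonneg (Pi.single i 1)
  simpa [Matrix.mulVec_single, dotProduct, Pi.single_apply] using this

lemma rayleigh_le_trace {k : ℕ} {M : Matrix (Fin k) (Fin k) ℝ} (hM : M.PosSemidef)
    {x : Fin k → ℝ} (hx : (∑ i, (x i) ^ 2) = 1) :
    x ⬝ᵥ M.mulVec x ≤ M.trace := by
  obtain ⟨B, rfl⟩ := (show ∃ B : Matrix (Fin k) (Fin k) ℝ, M = Bᴴ * B from by
    open scoped MatrixOrder in
    obtain ⟨B, hB⟩ := CStarAlgebra.nonneg_iff_eq_star_mul_self.mp hM.nonneg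
    exact ⟨B, hB⟩)
  rw [Matrix.conjTranspose_eq_transpose_of_trivial]
  have h1 : x ⬝ᵥ (Bᵀ * B).mulVec x = ∑ i, ((B *ᵥ x) i) ^ 2 := by
    rw [← Matrix.mulVec_mulVec, dotProduct_mulVec, Matrix.vecMul_transpose]
    simp [dotProduct, sq]
  have h2 : (Bᵀ * B).trace = ∑ j, ∑ i, (B i j) ^ 2 := by
    rw [Matrix.trace]
    congr 1; ext j
    simp [Matrix.diag, Matrix.mul_apply, sq]
  rw [h1, h2, Finset.sum_comm]
  refine Finset.sum_le_sum fun i _ => ?_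
  have hcs := Finset.sum_mul_sq_le_sq_mul_sq Finset.univ (fun j => B i j) x
  calc ((B *ᵥ x) i) ^ 2 = (∑ j, B i j * x j) ^ 2 := by rw [Matrix.mulVec, dotProduct]
    _ ≤ (∑ j, (B i j) ^ 2) * ∑ j, (x j) ^ 2 := hcs
    _ = ∑ j, (B i j) ^ 2 := by rw [hx, mul_one]
  -- square nonneg side condition? none
  
lemma lambdaMax_le_trace {k : ℕ} {M : Matrix (Fin k) (Fin k) ℝ} (hM : M.PosSemidef) :
    lambdaMax M ≤ M.trace := by
  rcases Nat.eq_zero_or_pos k with hk | hk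
  · subst hk
    have : {r : ℝ | ∃ x : Fin 0 → ℝ, (∑ i, (x i) ^ 2) = 1 ∧ r = x ⬝ᵥ M.mulVec x} = ∅ := by
      ext r; simp
    rw [lambdaMax, this, Real.sSup_empty]
    exact psd_trace_nonneg hM
  · refine csSup_le ⟨(Pi.single ⟨0, hk⟩ 1 : Fin k → ℝ) ⬝ᵥ M.mulVec (Pi.single ⟨0, hk⟩ 1),
      ⟨Pi.single ⟨0, hk⟩ 1, ?_, rfl⟩⟩ ?_
    · simp [Pi.single_apply]
    · rintro r ⟨x, hx, rfl⟩
      exact rayleigh_le_trace hM hx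

/-- For `λ > 0`, matrices `G_s ∈ ℝ^{d × k_s}` and
`V := λ I_d + ∑_s G_s G_sᵀ`, the largest eigenvalues of the matrices
`G_sᵀ V⁻¹ G_s` sum to at most `d`. -/
theorem sum_lambdaMax_le_dim
    (d n : ℕ) (hd : 1 ≤ d) (lam : ℝ) (hlam : 0 < lam)
    (k : Fin n → ℕ) (G : ∀ s : Fin n, Matrix (Fin d) (Fin (k s)) ℝ)
    (V : Matrix (Fin d) (Fin d) ℝ)
    (hV : V = lam • (1 : Matrix (Fin d) (Fin d) ℝ) + ∑ s, G s * (G s)ᵀ) :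
    ∑ s, lambdaMax ((G s)ᵀ * V⁻¹ * G s) ≤ (d : ℝ) := by
  have hGGc : ∀ s, (G s * (G s)ᵀ).PosSemidef := by
    intro s
    have := Matrix.posSemidef_self_mul_conjTranspose (G s)
    rwa [Matrix.conjTranspose_eq_transpose_of_trivial] at this
  have hsum : (∑ s, G s * (G s)ᵀ).PosSemidef := by
    classical
    induction (Finset.univ : Finset (Fin n)) using Finset.induction with
    | empty => simpa using Matrix.PosSemidef.zero
    | insert _ _ hnot ih =>
      rw [Finset.sum_insert hnot]
      exact (hGGc _).add ih
  have hone : (lam • (1 : Matrix (Fin d) (Fin d) ℝ)).PosDef := by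
    rw [Matrix.smul_one_eq_diagonal]
    exact Matrix.posDef_diagonal_iff.mpr fun _ => hlam
  have hVpos : V.PosDef := by rw [hV]; exact hone.add_posSemidef hsum
  have hT : (V⁻¹).PosDef := hVpos.inv
  have hpsd : ∀ s, ((G s)ᵀ * V⁻¹ * G s).PosSemidef := by
    intro s
    have := hT.posSemidef.conjTranspose_mul_mul_same (G s)
    rwa [Matrix.conjTranspose_eq_transpose_of_trivial] at this
  have step1 : ∑ s, lambdaMax ((G s)ᵀ * V⁻¹ * G s) ≤ ∑ s, ((G s)ᵀ * V⁻¹ * G s).trace :=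
    Finset.sum_le_sum fun s _ => lambdaMax_le_trace (hpsd s)
  have step2 : ∑ s, ((G s)ᵀ * V⁻¹ * G s).trace = (V⁻¹ * ∑ s, G s * (G s)ᵀ).trace := by
    rw [Finset.mul_sum, Matrix.trace_sum]
    refine Finset.sum_congr rfl fun s _ => ?_
    rw [Matrix.trace_mul_comm, ← Matrix.mul_assoc, Matrix.trace_mul_comm]
  have hVinv : V⁻¹ * V = 1 := Matrix.nonsing_inv_mul V ((Matrix.isUnit_iff_isUnit_det V).mp hVpos.isUnit)
  have step3 : (V⁻¹ * ∑ s, G s * (G s)ᵀ).trace = (d : ℝ) - lam * (V⁻¹).trace := by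
    have h : (∑ s, G s * (G s)ᵀ) = V - lam • (1 : Matrix (Fin d) (Fin d) ℝ) := by
      rw [hV]; abel
    rw [h, Matrix.mul_sub, hVinv, Matrix.mul_smul, Matrix.mul_one, Matrix.trace_sub,
      Matrix.trace_smul, Matrix.trace_one]
    simp
  have htrT : 0 ≤ (V⁻¹).trace := psd_trace_nonneg hT.posSemidef
  calc ∑ s, lambdaMax ((G s)ᵀ * V⁻¹ * G s) ≤ (V⁻¹ * ∑ s, G s * (G s)ᵀ).trace := by
        rw [← step2]; exact step1
    _ = (d : ℝ) - lam * (V⁻¹).trace := step3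
    _ ≤ (d : ℝ) := by nlinarith
end

section
/- Generalized elliptical potential lemma: Let λ > 0, C_g > 0, K ≥ 1, d ≥ 1 and t ≥ 1. For each s ∈ {1,…,t} let S_s be a nonempty finite index set with |S_s| ≤ K, and for each i ∈ S_s let x_{s,i} ∈ ℝ^d satisfy ‖x_{s,i}‖₂ ≤ C_g. Define V_s := λ I_d + ∑_{τ=1}^{s−1} ∑_{i ∈ S_τ} x_{τ,i} x_{τ,i}ᵀ for s = 1,…,t. Then ∑_{s=1}^{t} min{ 1, max_{i ∈ S_s} ‖x_{s,i}‖²_{V_s^{-1}} } ≤ 2 d · log(1 + t K C_g² / (d λ)). -/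
open Matrix

set_option maxHeartbeats 1000000

private lemma min1_le_two_log {u : ℝ} (hu : 0 ≤ u) : min 1 u ≤ 2 * Real.log (1 + u) := by
  rcases le_total u 1 with h | h
  · rw [min_eq_right h]
    have h1 : (0:ℝ) < 1 + u := by linarith
    have h2 : 1 - (1+u)⁻¹ ≤ Real.log (1+u) := Real.one_sub_inv_le_log_of_pos h1
    have h3 : u / (1+u) ≤ Real.log (1+u) := by
      have : 1 - (1+u)⁻¹ = u / (1+u) := by field_simp; ring
      linarith [this ▸ h2]
    have h4 : u / 2 ≤ u / (1+u) := by
      apply div_le_div_of_nonneg_left hu (by linarith) (by linarith)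
    linarith
  · rw [min_eq_left h]
    have h2 : Real.log 2 ≤ Real.log (1 + u) := by
      apply Real.log_le_log (by norm_num) (by linarith)
    have := Real.log_two_gt_d9
    linarith

private lemma trace_eq_sum_eig {d : ℕ} {A : Matrix (Fin d) (Fin d) ℝ} (hA : A.IsHermitian) :
    A.trace = ∑ i, hA.eigenvalues i := by
  conv_lhs => rw [hA.spectral_theorem]
  rw [Unitary.conjStarAlgAut_apply, Matrix.trace_mul_cycle]
  rw [Unitary.coe_star_mul_self, Matrix.one_mul, Matrix.trace_diagonal]
  simp

private lemma det_one_add_psd {d : ℕ} {B : Matrix (Fin d) (Fin d) ℝ} (hB : B.PosSemidef) :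
    1 ≤ (1 + B).det := by
  have hH : (1 + B).IsHermitian := Matrix.isHermitian_one.add hB.1
  rw [hH.det_eq_prod_eigenvalues]
  have h0 : (1:ℝ) = ∏ _i : Fin d, (1:ℝ) := by simp
  rw [h0]
  apply Finset.prod_le_prod (fun _ _ => zero_le_one)
  intro i _
  have hv := hH.eigenvectorBasis.orthonormal.1 i
  set v : EuclideanSpace ℝ (Fin d) := hH.eigenvectorBasis i with hvdef
  have hnorm : ∑ j, (v j)^2 = 1 := by
    have := congrArg (fun r => r^2) hv
    simp only [EuclideanSpace.norm_eq] at this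
    rw [Real.sq_sqrt (by positivity)] at this
    simpa [sq_abs] using this
  have heq := hH.eigenvalues_eq i
  rw [heq]
  have h1 : (star (⇑v)) ⬝ᵥ ((1 + B) *ᵥ ⇑v) = (⇑v ⬝ᵥ ⇑v) + (⇑v ⬝ᵥ (B *ᵥ ⇑v)) := by
    rw [Matrix.add_mulVec, dotProduct_add, Matrix.one_mulVec]
    simp
  have h2 : (⇑v ⬝ᵥ ⇑v : ℝ) = 1 := by
    simpa [dotProduct, pow_two] using hnorm
  have h3 : (0:ℝ) ≤ ⇑v ⬝ᵥ (B *ᵥ ⇑v) := by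
    have := hB.dotProduct_mulVec_nonneg (⇑v)
    simpa using this
  simp only [RCLike.re_to_real]
  rw [← hvdef, h1, h2]
  simp only [RCLike.ofReal_real_eq_id, id_eq]
  linarith
private lemma det_le_det_add {d : ℕ} {A B : Matrix (Fin d) (Fin d) ℝ}
    (hA : A.PosDef) (hB : B.PosSemidef) : A.det ≤ (A + B).det := by
  obtain ⟨m, w, hw⟩ := Matrix.posSemidef_iff_eq_sum_vecMulVec.mp hB
  obtain ⟨C, hC⟩ : ∃ C : Matrix (Fin m) (Fin d) ℝ, B = Cᴴ * C :=
    ⟨Matrix.of fun i j => w i j, by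
      rw [hw]; ext a b; simp [Matrix.mul_apply, Matrix.sum_apply, Matrix.vecMulVec_apply]⟩
  rw [hC, Matrix.det_add_mul Cᴴ C (isUnit_iff_ne_zero.mpr hA.det_pos.ne')]
  have hpsd : (C * A⁻¹ * Cᴴ).PosSemidef := hA.inv.posSemidef.mul_mul_conjTranspose_same C
  have h1 : 1 ≤ (1 + C * A⁻¹ * Cᴴ).det := by
    exact det_one_add_psd hpsd
  nlinarith [hA.det_pos]

private lemma psd_vecMulVec {d : ℕ} (y : Fin d → ℝ) : (Matrix.vecMulVec y y).PosSemidef := by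
  rw [Matrix.vecMulVec_eq Unit]
  have := Matrix.posSemidef_conjTranspose_mul_self (Matrix.replicateRow Unit y)
  have hrow : (Matrix.replicateRow Unit y)ᴴ = Matrix.replicateCol Unit y := by
    ext i j; simp [Matrix.conjTranspose_apply]
  rwa [hrow] at this

private lemma det_add_vecMulVec {d : ℕ} {A : Matrix (Fin d) (Fin d) ℝ} (hA : A.PosDef)
    (y : Fin d → ℝ) : (A + Matrix.vecMulVec y y).det = A.det * (1 + y ⬝ᵥ A⁻¹ *ᵥ y) := by
  rw [Matrix.vecMulVec_eq Unit, Matrix.det_add_replicateCol_mul_replicateRow (isUnit_iff_ne_zero.mpr hA.det_pos.ne')]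
  congr 1
  rw [Matrix.det_unique]
  simp only [Matrix.mul_apply, Matrix.replicateRow_apply, Matrix.replicateCol_apply, dotProduct, Matrix.mulVec,
    Finset.mul_sum, Finset.sum_mul, Pi.add_apply, Matrix.one_apply_eq, Matrix.add_apply]
  rw [Finset.sum_comm]
  exact congrArg _ (Finset.sum_congr rfl fun i _ => Finset.sum_congr rfl fun j _ => by ring)


private lemma det_le_trace_pow {d : ℕ} (hd : 1 ≤ d) {A : Matrix (Fin d) (Fin d) ℝ}
    (hA : A.PosDef) : A.det ≤ (A.trace / d) ^ d := by
  have hdpos : (0:ℝ) < d := by exact_mod_cast hd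
  set z := hA.1.eigenvalues with hzdef
  have hz : ∀ i, 0 ≤ z i := fun i => (hA.eigenvalues_pos i).le
  have amgm := Real.geom_mean_le_arith_mean_weighted Finset.univ (fun _ => 1/(d:ℝ)) z
    (fun _ _ => by positivity) (by rw [Finset.sum_const, Finset.card_univ, Fintype.card_fin, nsmul_eq_mul]; field_simp) (fun i _ => hz i)
  have htr : A.trace = ∑ i, z i := trace_eq_sum_eig hA.1
  have hdet : A.det = ∏ i, z i := by
    rw [hA.1.det_eq_prod_eigenvalues]; simp [hzdef]
  have hsum : ∑ i : Fin d, (1/(d:ℝ)) * z i = A.trace / d := by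
    rw [htr, ← Finset.mul_sum]; ring
  have key : (∏ i, z i ^ (1/(d:ℝ)))^d ≤ (A.trace/d)^d := by
    apply pow_le_pow_left₀ (Finset.prod_nonneg fun i _ => Real.rpow_nonneg (hz i) _)
    rw [← hsum]; exact amgm
  have hL : (∏ i, z i ^ (1/(d:ℝ)))^d = ∏ i, z i := by
    rw [← Finset.prod_pow]
    apply Finset.prod_congr rfl
    intro i _
    rw [← Real.rpow_natCast (z i ^ (1/(d:ℝ))) d, ← Real.rpow_mul (hz i),
      one_div, inv_mul_cancel₀ hdpos.ne', Real.rpow_one]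
  rw [hdet, ← hL]; exact key


/-- **Generalized elliptical potential lemma.**
For `λ > 0`, `C_g > 0`, nonempty index sets `S_s` of size at most `K`,
vectors `x_{s,i}` with `‖x_{s,i}‖₂ ≤ C_g`, and Gram matrices
`V_s := λ I_d + ∑_{τ < s} ∑_{i ∈ S_τ} x_{τ,i} x_{τ,i}ᵀ`, one has
`∑_{s=1}^t min{1, max_{i ∈ S_s} ‖x_{s,i}‖²_{V_s⁻¹}} ≤ 2 d log(1 + t K C_g² / (d λ))`. -/
theorem generalized_elliptical_potential
    (d K t : ℕ) (hd : 1 ≤ d) (hK : 1 ≤ K) (ht : 1 ≤ t)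
    (lam Cg : ℝ) (hlam : 0 < lam) (hCg : 0 < Cg)
    (ι : Type*) (S : Fin t → Finset ι)
    (hS : ∀ s, (S s).Nonempty) (hSK : ∀ s, (S s).card ≤ K)
    (x : Fin t → ι → (Fin d → ℝ))
    (hx : ∀ s, ∀ i ∈ S s, Real.sqrt (∑ j, (x s i j) ^ 2) ≤ Cg)
    (V : Fin t → Matrix (Fin d) (Fin d) ℝ)
    (hV : ∀ s : Fin t, V s = lam • (1 : Matrix (Fin d) (Fin d) ℝ)
      + ∑ τ ∈ Finset.univ.filter (fun τ : Fin t => τ < s),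
          ∑ i ∈ S τ, Matrix.vecMulVec (x τ i) (x τ i)) :
    ∑ s, min 1 ((S s).sup' (hS s) (fun i => x s i ⬝ᵥ (V s)⁻¹.mulVec (x s i)))
      ≤ 2 * (d : ℝ) * Real.log (1 + (t : ℝ) * (K : ℝ) * Cg ^ 2 / ((d : ℝ) * lam)) := by
  classical
  set m : Fin t → ℝ := fun s => (S s).sup' (hS s) (fun i => x s i ⬝ᵥ (V s)⁻¹.mulVec (x s i))
    with hmdef
  set M : ℕ → Matrix (Fin d) (Fin d) ℝ := fun n => lam • (1 : Matrix (Fin d) (Fin d) ℝ)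
      + ∑ τ ∈ Finset.univ.filter (fun τ : Fin t => (τ:ℕ) < n),
          ∑ i ∈ S τ, Matrix.vecMulVec (x τ i) (x τ i) with hMdef
  have hsmul : (lam • (1 : Matrix (Fin d) (Fin d) ℝ)).PosDef := by
    have h : lam • (1 : Matrix (Fin d) (Fin d) ℝ) = Matrix.diagonal (fun _ => lam) := by
      ext i j
      by_cases h : i = j <;> simp [Matrix.one_apply, h]
    rw [h]; exact Matrix.PosDef.diagonal (fun _ => hlam)
  have hsum2 : ∀ (s : Fin t) (F : Finset ι),
      (∑ i ∈ F, Matrix.vecMulVec (x s i) (x s i)).PosSemidef := by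
    intro s F
    apply Finset.sum_induction _ _ (fun a b ha hb => ha.add hb) Matrix.PosSemidef.zero
    intro i _
    exact psd_vecMulVec _
  have hsumPSD : ∀ (F : Finset (Fin t)),
      (∑ τ ∈ F, ∑ i ∈ S τ, Matrix.vecMulVec (x τ i) (x τ i)).PosSemidef := by
    intro F
    apply Finset.sum_induction _ _ (fun a b ha hb => ha.add hb) Matrix.PosSemidef.zero
    intro τ _
    exact hsum2 τ _
  have hMpos : ∀ n, (M n).PosDef := fun n => hsmul.add_posSemidef (hsumPSD _)
  have hVM : ∀ s : Fin t, V s = M s.val := by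
    intro s
    rw [hV s]
    rfl
  have hVpd : ∀ s : Fin t, (V s).PosDef := by
    intro s; rw [hVM s]; exact hMpos _
  have hm0 : ∀ s, 0 ≤ m s := by
    intro s
    obtain ⟨i0, hi0⟩ := hS s
    refine le_trans ?_ (Finset.le_sup' _ hi0)
    have h := (hVpd s).inv.posSemidef.dotProduct_mulVec_nonneg (x s i0)
    simpa using h
  have hstep : ∀ (n : ℕ) (hn : n < t), M (n+1) = M n
      + ∑ i ∈ S ⟨n,hn⟩, Matrix.vecMulVec (x ⟨n,hn⟩ i) (x ⟨n,hn⟩ i) := by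
    intro n hn
    have hfil : Finset.univ.filter (fun τ : Fin t => (τ:ℕ) < n+1)
        = insert ⟨n,hn⟩ (Finset.univ.filter (fun τ : Fin t => (τ:ℕ) < n)) := by
      ext τ
      simp [Fin.ext_iff]
      omega
    rw [hMdef]
    simp only
    rw [hfil, Finset.sum_insert (by simp)]
    abel
  have hdetstep : ∀ (n : ℕ) (hn : n < t),
      (M n).det * (1 + m ⟨n,hn⟩) ≤ (M (n+1)).det := by
    intro n hn
    obtain ⟨i0, hi0, hsup⟩ := Finset.exists_mem_eq_sup' (hS ⟨n,hn⟩)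
      (fun i => x ⟨n,hn⟩ i ⬝ᵥ (V ⟨n,hn⟩)⁻¹.mulVec (x ⟨n,hn⟩ i))
    have hmeq : m ⟨n,hn⟩ = x ⟨n,hn⟩ i0 ⬝ᵥ (M n)⁻¹ *ᵥ (x ⟨n,hn⟩ i0) := by
      rw [hmdef]
      simp only
      rw [hsup, ← hVM ⟨n,hn⟩]
    rw [hstep n hn, hmeq, ← Finset.add_sum_erase _ _ hi0, ← add_assoc]
    calc (M n).det * (1 + x ⟨n,hn⟩ i0 ⬝ᵥ (M n)⁻¹ *ᵥ (x ⟨n,hn⟩ i0))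
        = (M n + Matrix.vecMulVec (x ⟨n,hn⟩ i0) (x ⟨n,hn⟩ i0)).det :=
          (det_add_vecMulVec (hMpos n) _).symm
      _ ≤ ((M n + Matrix.vecMulVec (x ⟨n,hn⟩ i0) (x ⟨n,hn⟩ i0))
          + ∑ i ∈ (S ⟨n,hn⟩).erase i0, Matrix.vecMulVec (x ⟨n,hn⟩ i) (x ⟨n,hn⟩ i)).det := by
          apply det_le_det_add ((hMpos n).add_posSemidef (psd_vecMulVec _))
          apply hsum2
  have htel : ∀ n, n ≤ t →
      (d:ℝ) * Real.log lam
        + ∑ s ∈ Finset.univ.filter (fun s : Fin t => (s:ℕ) < n), Real.log (1 + m s)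
      ≤ Real.log ((M n).det) := by
    intro n
    induction n with
    | zero =>
      intro _
      have hM0 : M 0 = lam • (1 : Matrix (Fin d) (Fin d) ℝ) := by
        rw [hMdef]; simp
      rw [hM0, Matrix.det_smul, Matrix.det_one, mul_one, Real.log_pow]
      simp
    | succ n ih =>
      intro hn1
      have hn : n < t := hn1
      have h1 := hdetstep n hn
      have hfil : Finset.univ.filter (fun τ : Fin t => (τ:ℕ) < n+1)
          = insert ⟨n,hn⟩ (Finset.univ.filter (fun τ : Fin t => (τ:ℕ) < n)) := by
        ext τ
        simp [Fin.ext_iff]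
        omega
      rw [hfil, Finset.sum_insert (by simp)]
      have hdetpos : 0 < (M n).det := (hMpos n).det_pos
      have hpos1 : 0 < 1 + m ⟨n,hn⟩ := by have := hm0 ⟨n,hn⟩; linarith
      have h2 : Real.log ((M n).det * (1 + m ⟨n,hn⟩)) ≤ Real.log ((M (n+1)).det) :=
        Real.log_le_log (by positivity) h1
      rw [Real.log_mul hdetpos.ne' hpos1.ne'] at h2
      have ih' := ih (le_of_lt hn)
      linarith
  have hfilt : Finset.univ.filter (fun s : Fin t => (s:ℕ) < t) = Finset.univ := by
    ext s; simp [s.is_lt]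
  have hfin : (d:ℝ) * Real.log lam + ∑ s : Fin t, Real.log (1 + m s)
      ≤ Real.log ((M t).det) := by
    have := htel t le_rfl
    rwa [hfilt] at this
  -- trace bounds
  have htrvmv : ∀ (s : Fin t) (i : ι), (Matrix.vecMulVec (x s i) (x s i)).trace
      = ∑ j, (x s i j)^2 := by
    intro s i
    simp [Matrix.trace, Matrix.vecMulVec, Matrix.diag, pow_two]
  have htrM : (M t).trace = (d:ℝ) * lam
      + ∑ τ : Fin t, ∑ i ∈ S τ, ∑ j, (x τ i j)^2 := by
    rw [hMdef]
    simp only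
    rw [hfilt, Matrix.trace_add, Matrix.trace_smul, Matrix.trace_one, Matrix.trace_sum]
    congr 1
    · simp [mul_comm]
    · apply Finset.sum_congr rfl
      intro τ _
      rw [Matrix.trace_sum]
      exact Finset.sum_congr rfl fun i _ => htrvmv τ i
  have hxsq : ∀ (s : Fin t), ∀ i ∈ S s, ∑ j, (x s i j)^2 ≤ Cg^2 := by
    intro s i hi
    have hxle := hx s i hi
    have hnn : (0:ℝ) ≤ ∑ j, (x s i j)^2 := by positivity
    nlinarith [Real.sq_sqrt hnn, Real.sqrt_nonneg (∑ j, (x s i j)^2)]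
  have htrace : (M t).trace ≤ (d:ℝ) * lam + (t:ℝ) * ((K:ℝ) * Cg^2) := by
    rw [htrM]
    have hone : ∀ τ : Fin t, ∑ i ∈ S τ, ∑ j, (x τ i j)^2 ≤ (K:ℝ) * Cg^2 := by
      intro τ
      calc ∑ i ∈ S τ, ∑ j, (x τ i j)^2 ≤ ∑ _i ∈ S τ, Cg^2 :=
            Finset.sum_le_sum (fun i hi => hxsq τ i hi)
        _ = ((S τ).card : ℝ) * Cg^2 := by rw [Finset.sum_const, nsmul_eq_mul]
        _ ≤ (K:ℝ) * Cg^2 := by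
            apply mul_le_mul_of_nonneg_right _ (by positivity)
            exact_mod_cast hSK τ
    calc (d:ℝ) * lam + ∑ τ : Fin t, ∑ i ∈ S τ, ∑ j, (x τ i j)^2
        ≤ (d:ℝ) * lam + ∑ _τ : Fin t, (K:ℝ) * Cg^2 := by
          have := Finset.sum_le_sum (fun τ (_ : τ ∈ Finset.univ) => hone τ)
          linarith
      _ = (d:ℝ) * lam + (t:ℝ) * ((K:ℝ) * Cg^2) := by
          rw [Finset.sum_const, Finset.card_univ, Fintype.card_fin, nsmul_eq_mul]
  have htrlb : (d:ℝ) * lam ≤ (M t).trace := by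
    rw [htrM]
    have : (0:ℝ) ≤ ∑ τ : Fin t, ∑ i ∈ S τ, ∑ j, (x τ i j)^2 := by positivity
    linarith
  -- final assembly
  set T := (M t).trace with hTdef
  have hdpos : (0:ℝ) < d := by exact_mod_cast hd
  have hdl : (0:ℝ) < (d:ℝ) * lam := by positivity
  have hTpos : 0 < T := lt_of_lt_of_le hdl htrlb
  have hdetle : Real.log ((M t).det) ≤ (d:ℝ) * Real.log (T / d) := by
    have h1 := det_le_trace_pow hd (hMpos t)
    calc Real.log ((M t).det) ≤ Real.log ((T/d)^d) :=
          Real.log_le_log (hMpos t).det_pos h1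
      _ = (d:ℝ) * Real.log (T/d) := by rw [Real.log_pow]
  have hsumlog : ∑ s : Fin t, Real.log (1 + m s)
      ≤ (d:ℝ) * (Real.log (T/d) - Real.log lam) := by
    have := hfin
    nlinarith [hdetle]
  have hlogdiv : Real.log (T/d) - Real.log lam = Real.log (T/((d:ℝ)*lam)) := by
    rw [← Real.log_div (by positivity) hlam.ne']
    congr 1
    field_simp
  have hratio : T/((d:ℝ)*lam) ≤ 1 + (t:ℝ) * (K:ℝ) * Cg^2 / ((d:ℝ)*lam) := by
    rw [div_le_iff₀ hdl] at *
    have h := htrace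
    field_simp
    nlinarith
  have hlog2 : Real.log (T/((d:ℝ)*lam)) ≤ Real.log (1 + (t:ℝ) * (K:ℝ) * Cg^2 / ((d:ℝ)*lam)) := by
    apply Real.log_le_log (by positivity) hratio
  calc ∑ s, min 1 (m s) ≤ ∑ s : Fin t, 2 * Real.log (1 + m s) :=
        Finset.sum_le_sum (fun s _ => min1_le_two_log (hm0 s))
    _ = 2 * ∑ s : Fin t, Real.log (1 + m s) := by rw [Finset.mul_sum]
    _ ≤ 2 * ((d:ℝ) * (Real.log (T/d) - Real.log lam)) := by linarith
    _ = 2 * (d:ℝ) * Real.log (T/((d:ℝ)*lam)) := by rw [← hlogdiv]; ring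
    _ ≤ 2 * (d:ℝ) * Real.log (1 + (t:ℝ) * (K:ℝ) * Cg^2 / ((d:ℝ)*lam)) := by
        apply mul_le_mul_of_nonneg_left hlog2 (by positivity)
end

section
/- Determinant growth under rank-one updates: Let V ∈ ℝ^{d×d} be symmetric positive definite and let x_1, …, x_m ∈ ℝ^d. Then det(V + ∑_{i=1}^m x_i x_iᵀ) ≥ det(V) · (1 + ∑_{i=1}^m x_iᵀ V^{-1} x_i). In particular, det(V + ∑_{i=1}^m x_i x_iᵀ) ≥ det(V) · (1 + max_{1 ≤ i ≤ m} x_iᵀ V^{-1} x_i) whenever m ≥ 1. -/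
set_option maxHeartbeats 1000000
open Matrix

lemma one_add_trace_le_det {d : ℕ} {M : Matrix (Fin d) (Fin d) ℝ} (hM : M.PosSemidef) :
    1 + M.trace ≤ (1 + M).det := by
  classical
  have hH := hM.1
  set U : Matrix (Fin d) (Fin d) ℝ := (hH.eigenvectorUnitary : Matrix (Fin d) (Fin d) ℝ) with hUdef
  have hU1 : U * star U = 1 := (Matrix.mem_unitaryGroup_iff).mp hH.eigenvectorUnitary.2
  have hU2 : star U * U = 1 := (Matrix.mem_unitaryGroup_iff').mp hH.eigenvectorUnitary.2
  have hspec : M = U * diagonal (RCLike.ofReal ∘ hH.eigenvalues) * star U := hH.spectral_theorem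
  have hdecomp : (1 : Matrix (Fin d) (Fin d) ℝ) + M
      = U * (1 + diagonal (RCLike.ofReal ∘ hH.eigenvalues)) * star U := by
    rw [Matrix.mul_add, Matrix.add_mul, Matrix.mul_one, hU1, ← hspec]
  have hdet : (1 + M).det = ∏ i, (1 + hH.eigenvalues i) := by
    rw [hdecomp, det_mul, det_mul, mul_comm, ← mul_assoc, ← det_mul, hU2, det_one, one_mul]
    have : (1 : Matrix (Fin d) (Fin d) ℝ) + diagonal (RCLike.ofReal ∘ hH.eigenvalues)
        = diagonal (fun i => 1 + hH.eigenvalues i) := by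
      rw [← diagonal_one, diagonal_add]
      rfl
    rw [this, det_diagonal]
  have htr : M.trace = ∑ i, hH.eigenvalues i := by
    rw [congrArg Matrix.trace hspec, Matrix.trace_mul_cycle, hU2, Matrix.one_mul, trace_diagonal]
    rfl
  rw [hdet, htr]
  induction (Finset.univ : Finset (Fin d)) using Finset.induction with
  | empty => simp
  | insert _ _ hnot ih =>
    rename_i a s
    rw [Finset.sum_insert hnot, Finset.prod_insert hnot]
    have h0 : 0 ≤ hH.eigenvalues a := hM.eigenvalues_nonneg a
    have h1 : 0 ≤ ∑ i ∈ s, hH.eigenvalues i :=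
      Finset.sum_nonneg fun i _ => hM.eigenvalues_nonneg i
    nlinarith [ih]

lemma trace_mul_vecMulVec {d : ℕ} (M : Matrix (Fin d) (Fin d) ℝ) (x : Fin d → ℝ) :
    (M * vecMulVec x x).trace = x ⬝ᵥ M.mulVec x := by
  simp [Matrix.trace, Matrix.diag, Matrix.mul_apply, vecMulVec_apply, dotProduct, mulVec,
    Finset.mul_sum, Finset.sum_mul]
  congr 1; ext k; congr 1; ext j; ring

lemma posSemidef_vecMulVec_self {d : ℕ} (x : Fin d → ℝ) :
    (vecMulVec x x).PosSemidef := by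
  have : vecMulVec x x = replicateCol (Fin 1) x * (replicateCol (Fin 1) x)ᴴ := by
    ext i j
    simp [vecMulVec_apply, Matrix.mul_apply, Matrix.replicateCol, Matrix.replicateRow, conjTranspose_apply]
  rw [this]
  exact posSemidef_self_mul_conjTranspose _

/-- **Determinant growth under rank-one updates.**
For a symmetric positive definite `V` and vectors `x_1, …, x_m`,
`det(V + ∑_i x_i x_iᵀ) ≥ det(V) (1 + ∑_i x_iᵀ V⁻¹ x_i)`; in particular,
`det(V + ∑_i x_i x_iᵀ) ≥ det(V) (1 + max_i x_iᵀ V⁻¹ x_i)` whenever `m ≥ 1`. -/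
theorem det_rank_one_updates_ge
    (d m : ℕ) (V : Matrix (Fin d) (Fin d) ℝ) (hV : V.PosDef)
    (x : Fin m → (Fin d → ℝ)) :
    (V.det * (1 + ∑ i, x i ⬝ᵥ V⁻¹.mulVec (x i))
      ≤ (V + ∑ i, Matrix.vecMulVec (x i) (x i)).det) ∧
    (∀ hm : 1 ≤ m,
      V.det * (1 + (Finset.univ : Finset (Fin m)).sup'
          ⟨⟨0, hm⟩, Finset.mem_univ _⟩ (fun i => x i ⬝ᵥ V⁻¹.mulVec (x i)))
        ≤ (V + ∑ i, Matrix.vecMulVec (x i) (x i)).det) := by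
  classical
  set A : Matrix (Fin d) (Fin d) ℝ := ∑ i, Matrix.vecMulVec (x i) (x i) with hAdef
  have hA : A.PosSemidef := by
    rw [hAdef]
    apply Finset.sum_induction _ Matrix.PosSemidef
      (fun a b ha hb => ha.add hb) (PosSemidef.zero)
    exact fun i _ => posSemidef_vecMulVec_self (x i)
  open scoped MatrixOrder in
  obtain ⟨S, hS, hSS⟩ : ∃ S : Matrix (Fin d) (Fin d) ℝ, S.PosSemidef ∧ S * S = V :=
    ⟨CFC.sqrt V, (CFC.sqrt_nonneg V).posSemidef, CFC.sqrt_mul_sqrt_self V hV.posSemidef.nonneg⟩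
  have hdetS : S.det * S.det = V.det := by rw [← det_mul, hSS]
  have hVdetpos : 0 < V.det := hV.det_pos
  have hSdet : S.det ≠ 0 := by
    intro h; rw [h, mul_zero] at hdetS; exact hVdetpos.ne' hdetS.symm
  have hSunit : IsUnit S.det := isUnit_iff_ne_zero.mpr hSdet
  have hSinv : S⁻¹ * S = 1 := nonsing_inv_mul S hSunit
  have hSinv' : S * S⁻¹ = 1 := mul_nonsing_inv S hSunit
  have hSH : S⁻¹ᴴ = S⁻¹ := by rw [conjTranspose_nonsing_inv, hS.1]
  set B : Matrix (Fin d) (Fin d) ℝ := S⁻¹ * A * S⁻¹ with hBdef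
  have hB : B.PosSemidef := by
    have := hA.mul_mul_conjTranspose_same S⁻¹
    rwa [hSH] at this
  have hVinv : S⁻¹ * S⁻¹ = V⁻¹ := by rw [← Matrix.mul_inv_rev, hSS]
  have hdecomp : V + A = S * (1 + B) * S := by
    rw [hBdef, Matrix.mul_add, Matrix.add_mul, Matrix.mul_one, hSS]
    congr 1
    rw [← Matrix.mul_assoc, ← Matrix.mul_assoc, hSinv', Matrix.one_mul, Matrix.mul_assoc,
      hSinv, Matrix.mul_one]
  have hdet : (V + A).det = V.det * (1 + B).det := by
    rw [hdecomp, det_mul, det_mul, mul_comm, ← mul_assoc, hdetS]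
  have htr : B.trace = ∑ i, x i ⬝ᵥ V⁻¹.mulVec (x i) := by
    rw [hBdef, Matrix.trace_mul_cycle, hVinv, hAdef, Finset.mul_sum,
      Matrix.trace_sum]
    exact Finset.sum_congr rfl fun i _ => trace_mul_vecMulVec _ _
  have hkey : V.det * (1 + ∑ i, x i ⬝ᵥ V⁻¹.mulVec (x i)) ≤ (V + A).det := by
    rw [hdet, ← htr]
    exact mul_le_mul_of_nonneg_left (one_add_trace_le_det hB) hVdetpos.le
  refine ⟨hkey, fun hm => ?_⟩
  have hnn : ∀ i : Fin m, 0 ≤ x i ⬝ᵥ V⁻¹.mulVec (x i) := by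
    intro i
    have := hV.inv.posSemidef.dotProduct_mulVec_nonneg (x i)
    simpa using this
  have hsup : (Finset.univ : Finset (Fin m)).sup' ⟨⟨0, hm⟩, Finset.mem_univ _⟩
      (fun i => x i ⬝ᵥ V⁻¹.mulVec (x i)) ≤ ∑ i, x i ⬝ᵥ V⁻¹.mulVec (x i) := by
    apply Finset.sup'_le
    intro i _
    exact Finset.single_le_sum (fun j _ => hnn j) (Finset.mem_univ i)
  calc V.det * (1 + _) ≤ V.det * (1 + ∑ i, x i ⬝ᵥ V⁻¹.mulVec (x i)) := by
        apply mul_le_mul_of_nonneg_left _ hVdetpos.le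
        linarith
    _ ≤ (V + A).det := hkey
end

section
/- Deterministic recursion for self-normalized sums: Let t ≥ 1, let φ_1, …, φ_{t−1} ∈ ℝ^d, and let V_1, …, V_t ∈ ℝ^{d×d} be symmetric positive definite matrices satisfying V_s ⪯ V_{s+1} (Loewner order) for all s = 1, …, t−1. Define s_k := ∑_{s=1}^{k−1} φ_s for k = 1, …, t (so s_1 = 0). Then s_tᵀ V_t^{-1} s_t ≤ ∑_{s=1}^{t−1} φ_sᵀ V_s^{-1} φ_s + 2 ∑_{s=1}^{t−1} φ_sᵀ V_{s+1}^{-1} s_s. -/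
open Matrix

lemma quad_nonneg {d : ℕ} {M : Matrix (Fin d) (Fin d) ℝ} (hM : M.PosSemidef)
    (x : Fin d → ℝ) : 0 ≤ x ⬝ᵥ M *ᵥ x := by
  simpa using hM.dotProduct_mulVec_nonneg x

lemma sym_swap {d : ℕ} {M : Matrix (Fin d) (Fin d) ℝ} (hM : M.IsHermitian)
    (a b : Fin d → ℝ) : a ⬝ᵥ M *ᵥ b = b ⬝ᵥ M *ᵥ a := by
  rw [dotProduct_mulVec, ← Matrix.vecMul_transpose]
  have : Mᵀ = M := by have := hM.eq; rwa [conjTranspose_eq_transpose_of_trivial] at this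
  rw [this, dotProduct_comm]

lemma inv_quad_le {d : ℕ} {A B : Matrix (Fin d) (Fin d) ℝ} (hA : A.PosDef) (hB : B.PosDef)
    (hAB : (B - A).PosSemidef) (x : Fin d → ℝ) :
    x ⬝ᵥ B⁻¹ *ᵥ x ≤ x ⬝ᵥ A⁻¹ *ᵥ x := by
  set y := B⁻¹ *ᵥ x with hy
  have hAinv : A⁻¹.PosSemidef := hA.inv.posSemidef
  have h1 : 0 ≤ (x - A *ᵥ y) ⬝ᵥ A⁻¹ *ᵥ (x - A *ᵥ y) := quad_nonneg hAinv _
  have hAA : A⁻¹ *ᵥ (A *ᵥ y) = y := by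
    rw [Matrix.mulVec_mulVec, Matrix.nonsing_inv_mul _ hA.det_pos.ne'.isUnit, one_mulVec]
  have hxy : x ⬝ᵥ y = x ⬝ᵥ B⁻¹ *ᵥ x := rfl
  have hBy : B *ᵥ y = x := by
    rw [hy, Matrix.mulVec_mulVec, Matrix.mul_nonsing_inv _ hB.det_pos.ne'.isUnit, one_mulVec]
  have h2 : (A *ᵥ y) ⬝ᵥ (A⁻¹ *ᵥ x) = x ⬝ᵥ y := by rw [sym_swap hAinv.1, hAA]
  have h3 : 0 ≤ x ⬝ᵥ A⁻¹ *ᵥ x - 2 * (x ⬝ᵥ y) + y ⬝ᵥ A *ᵥ y := by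
    rw [Matrix.mulVec_sub, hAA, sub_dotProduct, dotProduct_sub, dotProduct_sub, h2] at h1
    have h4 : (A *ᵥ y) ⬝ᵥ y = y ⬝ᵥ A *ᵥ y := dotProduct_comm _ _
    linarith
  have h5 : 0 ≤ y ⬝ᵥ B *ᵥ y - y ⬝ᵥ A *ᵥ y := by
    have := quad_nonneg hAB y
    rwa [Matrix.sub_mulVec, dotProduct_sub] at this
  have h6 : y ⬝ᵥ B *ᵥ y = x ⬝ᵥ y := by rw [hBy, dotProduct_comm]
  linarith

/-- **Deterministic recursion for self-normalized sums.**
With `t = n + 1 ≥ 1`, vectors `φ_1, …, φ_{t−1}` (indexed by `Fin n`),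
positive definite matrices `V_1, …, V_t` (indexed by `Fin (n+1)`)
nondecreasing in the Loewner order, and partial sums
`s_k := ∑_{s < k} φ_s` (so `s_1 = 0`), one has
`s_tᵀ V_t⁻¹ s_t ≤ ∑_s φ_sᵀ V_s⁻¹ φ_s + 2 ∑_s φ_sᵀ V_{s+1}⁻¹ s_s`. -/
theorem self_normalized_sum_recursion
    (d n : ℕ) (φ : Fin n → (Fin d → ℝ))
    (V : Fin (n + 1) → Matrix (Fin d) (Fin d) ℝ)
    (hVpd : ∀ k, (V k).PosDef)
    (hmono : ∀ s : Fin n, (V s.succ - V s.castSucc).PosSemidef)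
    (S : Fin (n + 1) → (Fin d → ℝ))
    (hS : ∀ k : Fin (n + 1),
      S k = ∑ s ∈ Finset.univ.filter (fun s : Fin n => (s : ℕ) < (k : ℕ)), φ s) :
    S (Fin.last n) ⬝ᵥ (V (Fin.last n))⁻¹.mulVec (S (Fin.last n))
      ≤ (∑ s : Fin n, φ s ⬝ᵥ (V s.castSucc)⁻¹.mulVec (φ s))
        + 2 * ∑ s : Fin n, φ s ⬝ᵥ (V s.succ)⁻¹.mulVec (S s.castSucc) := by
  set f : Fin (n + 1) → ℝ := fun k => S k ⬝ᵥ (V k)⁻¹ *ᵥ S k with hf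
  have hS0 : S 0 = 0 := by rw [hS]; simp
  have hf0 : f 0 = 0 := by simp [hf, hS0]
  have hstep : ∀ s : Fin n, S s.succ = S s.castSucc + φ s := by
    intro s
    rw [hS, hS]
    have hins : Finset.univ.filter (fun s' : Fin n => (s' : ℕ) < ((s.succ : Fin (n+1)) : ℕ))
        = insert s (Finset.univ.filter (fun s' : Fin n => (s' : ℕ) < ((s.castSucc : Fin (n+1)) : ℕ))) := by
      ext a
      simp [Fin.val_succ, Fin.coe_castSucc, Nat.lt_succ_iff_lt_or_eq, Fin.ext_iff, or_comm]
      rw [le_iff_eq_or_lt, Fin.ext_iff]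
    rw [hins, Finset.sum_insert (by simp), add_comm]
  have key : ∀ s : Fin n, f s.succ - f s.castSucc
      ≤ φ s ⬝ᵥ (V s.castSucc)⁻¹ *ᵥ φ s + 2 * (φ s ⬝ᵥ (V s.succ)⁻¹ *ᵥ S s.castSucc) := by
    intro s
    have hHerm : ((V s.succ)⁻¹).IsHermitian := ((hVpd s.succ).inv).1
    have hexp : f s.succ = S s.castSucc ⬝ᵥ (V s.succ)⁻¹ *ᵥ S s.castSucc
        + φ s ⬝ᵥ (V s.succ)⁻¹ *ᵥ φ s + 2 * (φ s ⬝ᵥ (V s.succ)⁻¹ *ᵥ S s.castSucc) := by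
      show S s.succ ⬝ᵥ (V s.succ)⁻¹ *ᵥ S s.succ = _
      rw [hstep s, add_dotProduct, Matrix.mulVec_add, dotProduct_add, dotProduct_add,
        sym_swap hHerm (S s.castSucc) (φ s)]
      ring
    have i1 := inv_quad_le (hVpd s.castSucc) (hVpd s.succ) (hmono s) (S s.castSucc)
    have i2 := inv_quad_le (hVpd s.castSucc) (hVpd s.succ) (hmono s) (φ s)
    have hcs : f s.castSucc = S s.castSucc ⬝ᵥ (V s.castSucc)⁻¹ *ᵥ S s.castSucc := rfl
    linarith
  have tel : ∑ s : Fin n, (f s.succ - f s.castSucc) = f (Fin.last n) - f 0 := by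
    set g : ℕ → ℝ := fun k => f ⟨min k n, by omega⟩ with hg
    calc ∑ s : Fin n, (f s.succ - f s.castSucc)
        = ∑ s : Fin n, (g ((s : ℕ) + 1) - g (s : ℕ)) := by
          refine Finset.sum_congr rfl fun s _ => ?_
          have e1 : g ((s : ℕ) + 1) = f s.succ := by
            simp only [hg]; congr 1; ext
            simp only [Fin.val_succ]; exact Nat.min_eq_left s.isLt
          have e2 : g (s : ℕ) = f s.castSucc := by
            simp only [hg]; congr 1; ext
            simp only [Fin.coe_castSucc]; exact Nat.min_eq_left s.isLt.le
          rw [e1, e2]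
      _ = ∑ i ∈ Finset.range n, (g (i + 1) - g i) := Fin.sum_univ_eq_sum_range (fun i => g (i + 1) - g i) n
      _ = g n - g 0 := Finset.sum_range_sub g n
      _ = f (Fin.last n) - f 0 := by
          congr 1 <;> (simp only [hg]; congr 1; ext; simp)
  have sum_le : ∑ s : Fin n, (f s.succ - f s.castSucc)
      ≤ ∑ s : Fin n, (φ s ⬝ᵥ (V s.castSucc)⁻¹ *ᵥ φ s
        + 2 * (φ s ⬝ᵥ (V s.succ)⁻¹ *ᵥ S s.castSucc)) :=
    Finset.sum_le_sum fun s _ => key s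
  rw [tel, hf0, sub_zero, Finset.sum_add_distrib, ← Finset.mul_sum] at sum_le
  exact sum_le
end

section
/- Optimistic utility estimate (deterministic form of the paper's Lemma on optimism): Let f : ℝ^n → ℝ be twice continuously differentiable with ‖∇²f(w)‖_op ≤ C_h for all w ∈ ℝ^n, where C_h > 0. Let λ > 0 and let V ∈ ℝ^{n×n} be symmetric with V ⪰ λ I_n. Let β > 0 and let ŵ, w* ∈ ℝ^n satisfy ‖ŵ − w*‖²_V ≤ β. Define z := f(ŵ) + √β · ‖∇f(ŵ)‖_{V^{-1}} + β C_h / λ. Then 0 ≤ z − f(w*) ≤ 2√β · ‖∇f(ŵ)‖_{V^{-1}} + 2 β C_h / λ. -/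
open Matrix

/-- Symmetry of a real symmetric quadratic/bilinear form. -/
lemma symm_dot {n : ℕ} {V : Matrix (Fin n) (Fin n) ℝ} (hV : V.IsHermitian)
    (x y : Fin n → ℝ) : x ⬝ᵥ V.mulVec y = y ⬝ᵥ V.mulVec x := by
  have hVt : Vᵀ = V := by
    have := hV; rwa [Matrix.IsHermitian, Matrix.conjTranspose_eq_transpose_of_trivial] at this
  calc x ⬝ᵥ V.mulVec y = (Vᵀ.mulVec x) ⬝ᵥ y := by
        rw [Matrix.dotProduct_mulVec, Matrix.mulVec_transpose]
    _ = y ⬝ᵥ V.mulVec x := by rw [hVt, dotProduct_comm]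

/-- Cauchy–Schwarz for a real positive semidefinite bilinear form. -/
lemma psd_cauchy_schwarz {n : ℕ} {V : Matrix (Fin n) (Fin n) ℝ} (hV : V.PosSemidef)
    (x y : Fin n → ℝ) :
    (x ⬝ᵥ V.mulVec y) ^ 2 ≤ (x ⬝ᵥ V.mulVec x) * (y ⬝ᵥ V.mulVec y) := by
  have key : ∀ t : ℝ, 0 ≤ (y ⬝ᵥ V.mulVec y) * (t * t)
      + (2 * (x ⬝ᵥ V.mulVec y)) * t + (x ⬝ᵥ V.mulVec x) := by
    intro t
    have h0 := hV.dotProduct_mulVec_nonneg (x + t • y)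
    simp only [star_trivial] at h0
    have hxy := symm_dot hV.1 x y
    simp only [Matrix.mulVec_add, Matrix.mulVec_smul, add_dotProduct,
      dotProduct_add, smul_dotProduct, dotProduct_smul,
      smul_eq_mul] at h0
    rw [← hxy] at h0
    nlinarith [h0]
  have hd := discrim_le_zero key
  rw [discrim] at hd
  nlinarith [hd]

/-- Second-order Taylor bound for a function with bounded second derivative. -/
lemma taylor_bound {E : Type*} [NormedAddCommGroup E] [NormedSpace ℝ E]
    {f : E → ℝ} (hf : ContDiff ℝ 2 f) {Ch : ℝ} (hCh : 0 < Ch)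
    (hHess : ∀ w : E, ‖iteratedFDeriv ℝ 2 f w‖ ≤ Ch) (x y : E) :
    |f y - f x - fderiv ℝ f x (y - x)| ≤ Ch * ‖y - x‖ ^ 2 := by
  have hd1 : Differentiable ℝ f := hf.differentiable (by norm_num)
  have hd2 : Differentiable ℝ (fderiv ℝ f) :=
    (hf.fderiv_right (m := 1) (by norm_num)).differentiable (by norm_num)
  have hnorm2 : ∀ w : E, ‖fderiv ℝ (fderiv ℝ f) w‖ ≤ Ch := by
    intro w
    have h1 : ‖iteratedFDeriv ℝ 0 (fderiv ℝ (fderiv ℝ f)) w‖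
        = ‖iteratedFDeriv ℝ 1 (fderiv ℝ f) w‖ := norm_iteratedFDeriv_fderiv
    have h2 : ‖iteratedFDeriv ℝ 1 (fderiv ℝ f) w‖
        = ‖iteratedFDeriv ℝ 2 f w‖ := norm_iteratedFDeriv_fderiv
    rw [norm_iteratedFDeriv_zero] at h1
    rw [h1, h2]; exact hHess w
  have hLip : LipschitzWith Ch.toNNReal (fderiv ℝ f) := by
    refine lipschitzWith_of_nnnorm_fderiv_le hd2 fun w => ?_
    rw [← NNReal.coe_le_coe, coe_nnnorm, Real.coe_toNNReal _ hCh.le]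
    exact hnorm2 w
  have bound : ∀ w ∈ segment ℝ x y,
      ‖fderiv ℝ f w - fderiv ℝ f x‖ ≤ Ch * ‖y - x‖ := by
    intro w hw
    obtain ⟨a, b, ha, hb, hab, hw⟩ := hw
    have hwx : w - x = b • (y - x) := by
      rw [← hw]; rw [show a = 1 - b by linarith]; module
    have h1 : ‖fderiv ℝ f w - fderiv ℝ f x‖ ≤ Ch * ‖w - x‖ := by
      have := hLip.dist_le_mul w x
      rwa [dist_eq_norm, dist_eq_norm, Real.coe_toNNReal _ hCh.le] at this
    have h2 : ‖w - x‖ ≤ ‖y - x‖ := by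
      rw [hwx, norm_smul, Real.norm_eq_abs, abs_of_nonneg hb]
      nlinarith [norm_nonneg (y - x)]
    calc ‖fderiv ℝ f w - fderiv ℝ f x‖ ≤ Ch * ‖w - x‖ := h1
      _ ≤ Ch * ‖y - x‖ := by nlinarith
  have := (convex_segment x y).norm_image_sub_le_of_norm_fderiv_le'
    (fun w _ => (hd1 w)) bound (left_mem_segment ℝ x y) (right_mem_segment ℝ x y)
  rw [Real.norm_eq_abs] at this
  calc |f y - f x - (fderiv ℝ f x) (y - x)| ≤ Ch * ‖y - x‖ * ‖y - x‖ := this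
    _ = Ch * ‖y - x‖ ^ 2 := by ring

/-- **Optimistic utility estimate (deterministic form).**
Let `f : ℝ^n → ℝ` be `C²` with Hessian operator norm at most `C_h`, let
`V ⪰ λ I_n` be symmetric with `λ > 0`, and suppose `‖ŵ − w*‖²_V ≤ β` with
`β > 0`. Then the optimistic estimate
`z := f(ŵ) + √β ‖∇f(ŵ)‖_{V⁻¹} + β C_h / λ` satisfies
`0 ≤ z − f(w*) ≤ 2√β ‖∇f(ŵ)‖_{V⁻¹} + 2 β C_h / λ`. -/
theorem optimistic_utility_estimate
    (n : ℕ) (Ch lam : ℝ) (hCh : 0 < Ch) (hlam : 0 < lam)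
    (f : EuclideanSpace ℝ (Fin n) → ℝ) (hf : ContDiff ℝ 2 f)
    (hHess : ∀ w : EuclideanSpace ℝ (Fin n), ‖iteratedFDeriv ℝ 2 f w‖ ≤ Ch)
    (V : Matrix (Fin n) (Fin n) ℝ) (hVsymm : V.IsHermitian)
    (hV : (V - lam • (1 : Matrix (Fin n) (Fin n) ℝ)).PosSemidef)
    (β : ℝ) (hβ : 0 < β)
    (what wstar : EuclideanSpace ℝ (Fin n))
    (hclose : (WithLp.equiv 2 (Fin n → ℝ) (what - wstar))
        ⬝ᵥ V.mulVec (WithLp.equiv 2 (Fin n → ℝ) (what - wstar)) ≤ β)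
    (z : ℝ)
    (hz : z = f what
      + Real.sqrt β * Real.sqrt ((WithLp.equiv 2 (Fin n → ℝ) (gradient f what))
          ⬝ᵥ V⁻¹.mulVec (WithLp.equiv 2 (Fin n → ℝ) (gradient f what)))
      + β * Ch / lam) :
    0 ≤ z - f wstar ∧
      z - f wstar ≤ 2 * Real.sqrt β
          * Real.sqrt ((WithLp.equiv 2 (Fin n → ℝ) (gradient f what))
              ⬝ᵥ V⁻¹.mulVec (WithLp.equiv 2 (Fin n → ℝ) (gradient f what)))
        + 2 * β * Ch / lam := by
  classical
  set e := WithLp.equiv 2 (Fin n → ℝ)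
  set gd : Fin n → ℝ := e (gradient f what) with hgd
  set δE : EuclideanSpace ℝ (Fin n) := wstar - what with hδE
  set d : Fin n → ℝ := e δE with hdd
  -- the quadratic-form bound on d
  have hdV : d ⬝ᵥ V.mulVec d ≤ β := by
    have : e (what - wstar) = -d := by
      rw [hdd, hδE]; ext i; simp [e]
    rw [this] at hclose
    simp only [Matrix.mulVec_neg, neg_dotProduct, dotProduct_neg,
      neg_neg] at hclose
    exact hclose
  -- lower bound on the quadratic form: lam * (v ⬝ᵥ v) ≤ v ⬝ᵥ V v
  have hlow : ∀ v : Fin n → ℝ, lam * (v ⬝ᵥ v) ≤ v ⬝ᵥ V.mulVec v := by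
    intro v
    have h0 := hV.dotProduct_mulVec_nonneg v
    simp only [star_trivial, Matrix.sub_mulVec, Matrix.smul_mulVec,
      Matrix.one_mulVec, dotProduct_sub, dotProduct_smul,
      smul_eq_mul] at h0
    linarith
  -- V is positive definite
  have hVpd : V.PosDef := by
    refine Matrix.PosDef.of_dotProduct_mulVec_pos hVsymm fun x hx => ?_
    have h1 := hlow x
    have h2 : 0 < x ⬝ᵥ x := by
      have hne : x ⬝ᵥ x ≠ 0 := fun h => hx (dotProduct_self_eq_zero.mp h)
      have hnn : 0 ≤ x ⬝ᵥ x := Finset.sum_nonneg fun i _ => mul_self_nonneg (x i)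
      exact lt_of_le_of_ne hnn (Ne.symm hne)
    simp only [star_trivial]
    nlinarith
  have hVinv : (V⁻¹).PosDef := hVpd.inv
  -- nonnegativity facts
  have hgVg : 0 ≤ gd ⬝ᵥ V⁻¹.mulVec gd := by
    have := hVinv.posSemidef.dotProduct_mulVec_nonneg gd; simpa using this
  have hdVd0 : 0 ≤ d ⬝ᵥ V.mulVec d := by
    have := hVpd.posSemidef.dotProduct_mulVec_nonneg d; simpa using this
  set G : ℝ := Real.sqrt (gd ⬝ᵥ V⁻¹.mulVec gd) with hG
  have hG0 : 0 ≤ G := Real.sqrt_nonneg _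
  have hβs : 0 ≤ Real.sqrt β := Real.sqrt_nonneg _
  -- the inner product Q = ⟪∇f(ŵ), δ⟫ = gd ⬝ᵥ d
  have hgrad : fderiv ℝ f what δE = gd ⬝ᵥ d := by
    have h1 : fderiv ℝ f what δE = inner ℝ (gradient f what) δE := by
      rw [gradient]
      exact (InnerProductSpace.toDual_symm_apply).symm
    rw [h1, EuclideanSpace.inner_eq_star_dotProduct]
    simp [hgd, hdd, e, dotProduct_comm]
  -- Cauchy-Schwarz: |gd ⬝ᵥ d| ≤ G * sqrt β
  have hCS : |gd ⬝ᵥ d| ≤ G * Real.sqrt β := by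
    set x : Fin n → ℝ := V⁻¹.mulVec gd with hx
    have hdet : IsUnit V.det := (Matrix.isUnit_iff_isUnit_det V).mp hVpd.isUnit
    have hVx : V.mulVec x = gd := by
      rw [hx, Matrix.mulVec_mulVec, Matrix.mul_nonsing_inv _ hdet, Matrix.one_mulVec]
    have hgdd : gd ⬝ᵥ d = x ⬝ᵥ V.mulVec d := by
      calc gd ⬝ᵥ d = (V.mulVec x) ⬝ᵥ d := by rw [hVx]
        _ = d ⬝ᵥ V.mulVec x := dotProduct_comm _ _
        _ = x ⬝ᵥ V.mulVec d := symm_dot hVsymm d x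
    have hxVx : x ⬝ᵥ V.mulVec x = gd ⬝ᵥ V⁻¹.mulVec gd := by
      calc x ⬝ᵥ V.mulVec x = x ⬝ᵥ gd := by rw [hVx]
        _ = gd ⬝ᵥ x := dotProduct_comm _ _
        _ = gd ⬝ᵥ V⁻¹.mulVec gd := by rw [hx]
    have hcs := psd_cauchy_schwarz hVpd.posSemidef x d
    rw [← hgdd, hxVx] at hcs
    have h1 : |gd ⬝ᵥ d| = Real.sqrt ((gd ⬝ᵥ d) ^ 2) := (Real.sqrt_sq_eq_abs _).symm
    rw [h1]
    calc Real.sqrt ((gd ⬝ᵥ d) ^ 2)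
        ≤ Real.sqrt ((gd ⬝ᵥ V⁻¹.mulVec gd) * (d ⬝ᵥ V.mulVec d)) := Real.sqrt_le_sqrt hcs
      _ ≤ Real.sqrt ((gd ⬝ᵥ V⁻¹.mulVec gd) * β) := by
          apply Real.sqrt_le_sqrt; nlinarith
      _ = G * Real.sqrt β := Real.sqrt_mul hgVg β
  -- Taylor bound
  have hnd : ‖δE‖ ^ 2 = d ⬝ᵥ d := by
    have h1 : (inner ℝ δE δE : ℝ) = ‖δE‖ ^ 2 := real_inner_self_eq_norm_sq δE
    rw [← h1, EuclideanSpace.inner_eq_star_dotProduct]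
    simp [hdd, e]
  have hnd2 : ‖δE‖ ^ 2 ≤ β / lam := by
    rw [hnd]
    have := hlow d
    rw [div_eq_inv_mul, le_inv_mul_iff₀ hlam]
    linarith
  have hTay : |f wstar - f what - fderiv ℝ f what δE| ≤ Ch * (β / lam) := by
    have h1 := taylor_bound hf hCh hHess what wstar
    have h2 : wstar - what = δE := rfl
    rw [h2] at h1
    calc |f wstar - f what - fderiv ℝ f what δE| ≤ Ch * ‖δE‖ ^ 2 := h1
      _ ≤ Ch * (β / lam) := by nlinarith
  -- put everything together
  rw [hgrad] at hTay
  have habs1 := abs_le.mp hTay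
  have habs2 := abs_le.mp hCS
  have hβCh : 0 ≤ β * Ch / lam := by positivity
  constructor
  · rw [hz]
    have : β * Ch / lam = Ch * (β / lam) := by ring
    rw [this]
    linarith [habs1.2, habs2.1]
  · rw [hz]
    have h3 : 2 * β * Ch / lam = Ch * (β / lam) + β * Ch / lam := by ring
    linarith [habs1.1, habs2.2]
end

section
/- Integrated Hessian lower bound under the self-concordant-like property: Let ℓ : ℝ^n → ℝ be twice continuously differentiable and let M ≥ 0 be such that for all x, y ∈ ℝ^n, ∇²ℓ(y) ⪰ exp(−M ‖y − x‖₂) ∇²ℓ(x) in the Loewner order. Then for any w₁, w₂ ∈ ℝ^n, the matrix G := ∫₀¹ ∇²ℓ(w₁ + z (w₂ − w₁)) dz satisfies G ⪰ (1 / (1 + M ‖w₂ − w₁‖₂)) ∇²ℓ(w₁). -/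
open Matrix

/-- **Integrated Hessian lower bound under the self-concordant-like property.**
If `ℓ : ℝ^n → ℝ` is `C²` and `M ≥ 0` satisfies
`∇²ℓ(y) ⪰ exp(−M ‖y − x‖₂) ∇²ℓ(x)` for all `x, y` (stated via quadratic
forms), then the averaged Hessian `G := ∫₀¹ ∇²ℓ(w₁ + z (w₂ − w₁)) dz`
satisfies `G ⪰ (1 / (1 + M ‖w₂ − w₁‖₂)) ∇²ℓ(w₁)`, i.e. the corresponding
quadratic-form inequality holds for every vector `v`. -/
theorem integrated_hessian_lower_bound
    (n : ℕ) (ℓ : EuclideanSpace ℝ (Fin n) → ℝ) (hℓ : ContDiff ℝ 2 ℓ)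
    (M : ℝ) (hM : 0 ≤ M)
    (hsc : ∀ x y v : EuclideanSpace ℝ (Fin n),
      Real.exp (-(M * ‖y - x‖)) * iteratedFDeriv ℝ 2 ℓ x ![v, v]
        ≤ iteratedFDeriv ℝ 2 ℓ y ![v, v])
    (w₁ w₂ : EuclideanSpace ℝ (Fin n)) :
    ∀ v : EuclideanSpace ℝ (Fin n),
      (1 / (1 + M * ‖w₂ - w₁‖)) * iteratedFDeriv ℝ 2 ℓ w₁ ![v, v]
        ≤ ∫ z in (0:ℝ)..1, iteratedFDeriv ℝ 2 ℓ (w₁ + z • (w₂ - w₁)) ![v, v] := by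
  intro v
  set c : ℝ := M * ‖w₂ - w₁‖ with hc
  have hc0 : 0 ≤ c := mul_nonneg hM (norm_nonneg _)
  set Q : ℝ := iteratedFDeriv ℝ 2 ℓ w₁ ![v, v] with hQ
  set g : ℝ → ℝ := fun z => iteratedFDeriv ℝ 2 ℓ (w₁ + z • (w₂ - w₁)) ![v, v] with hg
  -- continuity of g
  have hgcont : Continuous g := by
    have h1 : Continuous (iteratedFDeriv ℝ 2 ℓ) :=
      hℓ.continuous_iteratedFDeriv (le_refl _)
    have h2 : Continuous fun z : ℝ => w₁ + z • (w₂ - w₁) := by fun_prop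
    exact (continuous_eval_const ![v, v]).comp (h1.comp h2)
  -- pointwise lower bound
  have hbound : ∀ z ∈ Set.Icc (0:ℝ) 1, Real.exp (-(c * z)) * Q ≤ g z := by
    intro z hz
    have h := hsc w₁ (w₁ + z • (w₂ - w₁)) v
    have hnorm : ‖w₁ + z • (w₂ - w₁) - w₁‖ = z * ‖w₂ - w₁‖ := by
      rw [add_sub_cancel_left, norm_smul, Real.norm_eq_abs, abs_of_nonneg hz.1]
    rw [hnorm] at h
    calc Real.exp (-(c * z)) * Q = Real.exp (-(M * (z * ‖w₂ - w₁‖))) * Q := by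
          rw [hc]; ring_nf
      _ ≤ g z := h
  have hint1 : IntervalIntegrable g MeasureTheory.volume 0 1 :=
    hgcont.intervalIntegrable 0 1
  have hint2 : IntervalIntegrable (fun z => Real.exp (-(c * z)) * Q)
      MeasureTheory.volume 0 1 := by
    apply Continuous.intervalIntegrable; fun_prop
  have hmono : ∫ z in (0:ℝ)..1, Real.exp (-(c * z)) * Q ≤ ∫ z in (0:ℝ)..1, g z :=
    intervalIntegral.integral_mono_on (by norm_num) hint2 hint1 hbound
  rcases eq_or_lt_of_le hc0 with hczero | hcpos
  · -- c = 0
    have : ∫ z in (0:ℝ)..1, Real.exp (-(c * z)) * Q = Q := by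
      rw [← hczero]; simp
    rw [this] at hmono
    rw [← hczero]
    simpa using hmono
  · -- c > 0
    -- Q ≥ 0
    have hQ0 : 0 ≤ Q := by
      have h1 := hsc w₁ w₂ v
      have h2 := hsc w₂ w₁ v
      rw [norm_sub_rev w₁ w₂] at h2
      have he : Real.exp (-(M * ‖w₂ - w₁‖)) < 1 := by
        rw [Real.exp_lt_one_iff]; linarith
      have hep : 0 < Real.exp (-(M * ‖w₂ - w₁‖)) := Real.exp_pos _
      have h3 : Real.exp (-(M * ‖w₂ - w₁‖)) * (Real.exp (-(M * ‖w₂ - w₁‖)) *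
          iteratedFDeriv ℝ 2 ℓ w₁ ![v, v]) ≤ iteratedFDeriv ℝ 2 ℓ w₁ ![v, v] :=
        le_trans (mul_le_mul_of_nonneg_left h1 hep.le) h2
      rw [← hQ] at h3
      have hE2 : Real.exp (-(M * ‖w₂ - w₁‖)) * Real.exp (-(M * ‖w₂ - w₁‖)) < 1 := by
        nlinarith
      nlinarith [h3, hE2]
    -- compute the integral
    have hIeq : ∫ z in (0:ℝ)..1, Real.exp (-(c * z)) * Q
        = (1 - Real.exp (-c)) / c * Q := by
      rw [intervalIntegral.integral_mul_const]
      congr 1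
      have : ∀ z : ℝ, Real.exp (-(c * z)) = Real.exp (-c * z) := by intro z; ring_nf
      simp_rw [this]
      rw [intervalIntegral.integral_comp_mul_left (fun x => Real.exp x) (by linarith : (-c) ≠ 0)]
      simp [Real.exp_neg]
      field_simp
      ring
    rw [hIeq] at hmono
    refine le_trans ?_ hmono
    -- 1/(1+c) * Q ≤ (1 - exp(-c))/c * Q
    have hexp : c + 1 ≤ Real.exp c := Real.add_one_le_exp c
    have h1 : Real.exp (-c) * Real.exp c = 1 := by
      rw [← Real.exp_add]; simp
    have hep : 0 < Real.exp (-c) := Real.exp_pos _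
    rw [div_mul_eq_mul_div, div_mul_eq_mul_div, div_le_div_iff₀ (by linarith) hcpos]
    nlinarith [mul_le_mul_of_nonneg_left hexp hep.le]
end

section
/- Bridge inequality between parameter distance and gradient difference: Let ℓ : ℝ^n → ℝ be twice continuously differentiable and let M ≥ 0 be such that for all x, y ∈ ℝ^n, ∇²ℓ(y) ⪰ exp(−M ‖y − x‖₂) ∇²ℓ(x) in the Loewner order. Let w₁, w₂ ∈ ℝ^n and suppose ∇²ℓ(w₁) is positive definite. Then ‖w₁ − w₂‖²_{∇²ℓ(w₁)} ≤ (1 + M ‖w₂ − w₁‖₂)² · ‖∇ℓ(w₁) − ∇ℓ(w₂)‖²_{(∇²ℓ(w₁))^{-1}}. -/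
open Matrix

private lemma bridge_cs_aux {m : ℕ} {H : Matrix (Fin m) (Fin m) ℝ} (hH : H.PosDef)
    (u v : Fin m → ℝ) : (v ⬝ᵥ u) ^ 2 ≤ (u ⬝ᵥ H *ᵥ u) * (v ⬝ᵥ H⁻¹ *ᵥ v) := by
  have hdet : IsUnit H.det := hH.det_pos.ne'.isUnit
  have hHH : H * H⁻¹ = 1 := mul_nonsing_inv H hdet
  have hHH' : H⁻¹ * H = 1 := nonsing_inv_mul H hdet
  have hsymm' : H⁻¹ᵀ = H⁻¹ := by
    have h := hH.inv.1
    ext i j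
    have := congrFun (congrFun h i) j
    simpa [Matrix.conjTranspose_apply] using this
  have flip : ∀ x y : Fin m → ℝ, (H⁻¹ *ᵥ x) ⬝ᵥ y = x ⬝ᵥ (H⁻¹ *ᵥ y) := by
    intro x y
    rw [dotProduct_comm, dotProduct_mulVec, ← hsymm', vecMul_transpose, dotProduct_comm,
      hsymm']
  have key : ∀ s : ℝ, 0 ≤ (u ⬝ᵥ H *ᵥ u) * (s * s) + (-(2 * (v ⬝ᵥ u))) * s + (v ⬝ᵥ H⁻¹ *ᵥ v) := by
    intro s
    have h0 := hH.posSemidef.dotProduct_mulVec_nonneg (s • u - H⁻¹ *ᵥ v)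
    simp only [star_trivial, mulVec_sub, mulVec_smul, sub_dotProduct, dotProduct_sub,
      smul_dotProduct, dotProduct_smul, smul_eq_mul, mulVec_mulVec, hHH, one_mulVec] at h0
    simp only [flip, mulVec_mulVec, hHH', one_mulVec] at h0
    rw [dotProduct_comm u v] at h0
    nlinarith [h0]
  have hd := discrim_le_zero key
  rw [discrim] at hd
  nlinarith [hd]

private lemma bridge_exp_aux {A a : ℝ} (hA : 0 ≤ A) (ha : 0 ≤ a) :
    A / (1 + a) ≤ ∫ t in (0:ℝ)..1, A * Real.exp (-(a * (1 - t))) := by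
  rcases eq_or_lt_of_le ha with h0 | ha
  · simp [← h0]
  have hder : ∀ t : ℝ, HasDerivAt (fun t => (A / a) * Real.exp (-(a * (1 - t))))
      (A * Real.exp (-(a * (1 - t)))) t := by
    intro t
    have hg : HasDerivAt (fun t : ℝ => -(a * (1 - t))) a t := by
      have : HasDerivAt (fun t : ℝ => a * t - a) a t := by
        simpa using ((hasDerivAt_id t).const_mul a).sub_const a
      convert this using 2 with t
      ring
    have := (hg.exp).const_mul (A / a)
    refine this.congr_deriv ?_
    rw [mul_comm (Real.exp _) a, ← mul_assoc, div_mul_cancel₀ _ ha.ne']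
  have hcont : Continuous (fun t : ℝ => A * Real.exp (-(a * (1 - t)))) := by continuity
  have hint : ∫ t in (0:ℝ)..1, A * Real.exp (-(a * (1 - t)))
      = (A / a) * Real.exp (-(a * (1 - 1))) - (A / a) * Real.exp (-(a * (1 - 0))) :=
    intervalIntegral.integral_eq_sub_of_hasDerivAt (fun t _ => hder t)
      (hcont.intervalIntegrable 0 1)
  rw [hint]
  have h1 : 1 + a ≤ Real.exp a := by linarith [Real.add_one_le_exp a]
  have h2 : Real.exp (-a) * Real.exp a = 1 := by rw [← Real.exp_add]; simp
  have h3 : 0 < Real.exp (-a) := Real.exp_pos _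
  have key : 1 / (1 + a) ≤ (1 - Real.exp (-a)) / a := by
    rw [div_le_div_iff₀ (by linarith) ha]
    nlinarith
  have hre : A / (1 + a) = A * (1 / (1 + a)) := by ring
  rw [hre]
  calc A * (1 / (1 + a)) ≤ A * ((1 - Real.exp (-a)) / a) :=
        mul_le_mul_of_nonneg_left key hA
    _ = (A / a) * Real.exp (-(a * (1 - 1))) - (A / a) * Real.exp (-(a * (1 - 0))) := by
        simp only [sub_self, mul_zero, neg_zero, Real.exp_zero, sub_zero, mul_one]
        field_simp

set_option maxHeartbeats 1000000 in
/-- **Bridge inequality between parameter distance and gradient difference.**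
If `ℓ : ℝ^n → ℝ` is `C²`, `M ≥ 0` satisfies the self-concordant-like
property `∇²ℓ(y) ⪰ exp(−M ‖y − x‖₂) ∇²ℓ(x)` (stated via quadratic forms),
and `H` is the (symmetric, positive definite) Hessian matrix of `ℓ` at `w₁`,
then `‖w₁ − w₂‖²_H ≤ (1 + M ‖w₂ − w₁‖₂)² ‖∇ℓ(w₁) − ∇ℓ(w₂)‖²_{H⁻¹}`. -/
theorem bridge_parameter_gradient
    (n : ℕ) (ℓ : EuclideanSpace ℝ (Fin n) → ℝ) (hℓ : ContDiff ℝ 2 ℓ)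
    (M : ℝ) (hM : 0 ≤ M)
    (hsc : ∀ x y v : EuclideanSpace ℝ (Fin n),
      Real.exp (-(M * ‖y - x‖)) * iteratedFDeriv ℝ 2 ℓ x ![v, v]
        ≤ iteratedFDeriv ℝ 2 ℓ y ![v, v])
    (w₁ w₂ : EuclideanSpace ℝ (Fin n))
    (H : Matrix (Fin n) (Fin n) ℝ)
    (hH : ∀ v : EuclideanSpace ℝ (Fin n),
      (WithLp.equiv 2 (Fin n → ℝ) v) ⬝ᵥ H.mulVec (WithLp.equiv 2 (Fin n → ℝ) v)
        = iteratedFDeriv ℝ 2 ℓ w₁ ![v, v])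
    (hHpd : H.PosDef) :
    (WithLp.equiv 2 (Fin n → ℝ) (w₁ - w₂))
        ⬝ᵥ H.mulVec (WithLp.equiv 2 (Fin n → ℝ) (w₁ - w₂))
      ≤ (1 + M * ‖w₂ - w₁‖) ^ 2 *
        ((WithLp.equiv 2 (Fin n → ℝ) (gradient ℓ w₁ - gradient ℓ w₂))
          ⬝ᵥ H⁻¹.mulVec (WithLp.equiv 2 (Fin n → ℝ) (gradient ℓ w₁ - gradient ℓ w₂))) := by
  have hnrev : ‖w₂ - w₁‖ = ‖w₁ - w₂‖ := norm_sub_rev _ _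
  rw [hnrev]
  set d : EuclideanSpace ℝ (Fin n) := w₁ - w₂ with hddef
  set g : EuclideanSpace ℝ (Fin n) := gradient ℓ w₁ - gradient ℓ w₂ with hgdef
  set a : ℝ := M * ‖d‖ with hadef
  set A : ℝ := (WithLp.equiv 2 (Fin n → ℝ) d) ⬝ᵥ H.mulVec (WithLp.equiv 2 (Fin n → ℝ) d)
    with hAdef
  set C : ℝ := (WithLp.equiv 2 (Fin n → ℝ) g) ⬝ᵥ H⁻¹.mulVec (WithLp.equiv 2 (Fin n → ℝ) g)
    with hCdef
  have ha0 : 0 ≤ a := mul_nonneg hM (norm_nonneg _)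
  have ha1 : (0:ℝ) < 1 + a := by linarith
  have hA0 : 0 ≤ A := by
    have := hHpd.posSemidef.dotProduct_mulVec_nonneg (WithLp.equiv 2 (Fin n → ℝ) d)
    simpa [star_trivial, hAdef] using this
  have hC0 : 0 ≤ C := by
    have := hHpd.inv.posSemidef.dotProduct_mulVec_nonneg (WithLp.equiv 2 (Fin n → ℝ) g)
    simpa [star_trivial, hCdef] using this
  -- the line segment
  set L : ℝ → EuclideanSpace ℝ (Fin n) := fun t => w₂ + t • d with hLdef
  have hL : ∀ t : ℝ, HasDerivAt L d t := by
    intro t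
    have := ((hasDerivAt_id t).smul_const d).const_add w₂
    simpa [hLdef] using this
  have hL1 : L 1 = w₁ := by simp [hLdef, hddef]
  have hL0 : L 0 = w₂ := by simp [hLdef]
  have hfd : ContDiff ℝ 1 (fderiv ℝ ℓ) := hℓ.fderiv_right (by norm_num)
  have hφ : ∀ t : ℝ, HasDerivAt (fun s => fderiv ℝ ℓ (L s) d)
      (iteratedFDeriv ℝ 2 ℓ (L t) ![d, d]) t := by
    intro t
    have h1 : HasFDerivAt (fderiv ℝ ℓ) (fderiv ℝ (fderiv ℝ ℓ) (L t)) (L t) :=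
      (hfd.differentiable (by norm_num) (L t)).hasFDerivAt
    have h2 : HasDerivAt (fun s => fderiv ℝ ℓ (L s)) (fderiv ℝ (fderiv ℝ ℓ) (L t) d) t :=
      h1.comp_hasDerivAt t (hL t)
    have h3 := h2.clm_apply (hasDerivAt_const t d)
    rw [iteratedFDeriv_two_apply]
    simpa using h3
  have hcont : Continuous (fun t => iteratedFDeriv ℝ 2 ℓ (L t) ![d, d]) := by
    have h2 : Continuous (fun x => iteratedFDeriv ℝ 2 ℓ x) :=
      hℓ.continuous_iteratedFDeriv le_rfl
    exact (continuous_eval_const ![d, d]).comp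
      (h2.comp (by continuity))
  have hFTC : ∫ t in (0:ℝ)..1, iteratedFDeriv ℝ 2 ℓ (L t) ![d, d]
      = fderiv ℝ ℓ (L 1) d - fderiv ℝ ℓ (L 0) d :=
    intervalIntegral.integral_eq_sub_of_hasDerivAt (fun t _ => hφ t)
      (hcont.intervalIntegrable 0 1)
  -- pointwise lower bound on the integrand
  have hlow : ∀ t ∈ Set.Icc (0:ℝ) 1,
      A * Real.exp (-(a * (1 - t))) ≤ iteratedFDeriv ℝ 2 ℓ (L t) ![d, d] := by
    intro t ht
    have hdiff : L t - w₁ = (t - 1) • d := by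
      rw [hLdef]
      simp only []
      rw [hddef]
      module
    have hnorm : ‖L t - w₁‖ = (1 - t) * ‖d‖ := by
      rw [hdiff, norm_smul, Real.norm_eq_abs, abs_of_nonpos (by linarith [ht.2])]
      ring
    have := hsc w₁ (L t) d
    rw [hnorm, ← hH d, ← hAdef] at this
    calc A * Real.exp (-(a * (1 - t)))
        = Real.exp (-(M * ((1 - t) * ‖d‖))) * A := by
          rw [mul_comm]
          congr 1
          congr 1
          rw [hadef]; ring
      _ ≤ iteratedFDeriv ℝ 2 ℓ (L t) ![d, d] := this
  -- integral comparison
  have hint1 : IntervalIntegrable (fun t : ℝ => A * Real.exp (-(a * (1 - t))))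
      MeasureTheory.volume 0 1 := by
    have hc : Continuous (fun t : ℝ => A * Real.exp (-(a * (1 - t)))) := by fun_prop
    exact hc.intervalIntegrable 0 1
  have hmono : ∫ t in (0:ℝ)..1, A * Real.exp (-(a * (1 - t)))
      ≤ ∫ t in (0:ℝ)..1, iteratedFDeriv ℝ 2 ℓ (L t) ![d, d] :=
    intervalIntegral.integral_mono_on (by norm_num) hint1
      (hcont.intervalIntegrable 0 1) hlow
  have hexp := bridge_exp_aux hA0 ha0
  -- identify the right-hand side with ⟪g, d⟫
  have hgrad : ∀ x : EuclideanSpace ℝ (Fin n),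
      fderiv ℝ ℓ x d = (inner ℝ (gradient ℓ x) d : ℝ) := by
    intro x
    rw [gradient]
    exact (InnerProductSpace.toDual_symm_apply).symm
  set B : ℝ := (WithLp.equiv 2 (Fin n → ℝ) g) ⬝ᵥ (WithLp.equiv 2 (Fin n → ℝ) d) with hBdef
  have hinner : ∀ x y : EuclideanSpace ℝ (Fin n),
      (inner ℝ x y : ℝ) = (WithLp.equiv 2 (Fin n → ℝ) x) ⬝ᵥ (WithLp.equiv 2 (Fin n → ℝ) y) := by
    intro x y
    simp [PiLp.inner_apply, dotProduct, RCLike.inner_apply, mul_comm]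
  have hBeq : fderiv ℝ ℓ (L 1) d - fderiv ℝ ℓ (L 0) d = B := by
    rw [hL1, hL0, hgrad, hgrad, ← inner_sub_left, ← hgdef, hinner]
  have hAB : A ≤ (1 + a) * B := by
    have h1 : A / (1 + a) ≤ B := by
      rw [← hBeq, ← hFTC]
      exact hexp.trans hmono
    rw [div_le_iff₀ ha1] at h1
    linarith [h1]
  -- Cauchy–Schwarz
  have hCS : B ^ 2 ≤ A * C :=
    bridge_cs_aux hHpd (WithLp.equiv 2 (Fin n → ℝ) d) (WithLp.equiv 2 (Fin n → ℝ) g)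
  -- final algebra
  rcases eq_or_lt_of_le hA0 with hA | hA
  · rw [← hA]
    positivity
  · have hB0 : 0 ≤ B := by nlinarith
    have e1 : A * A ≤ ((1 + a) * B) * A := mul_le_mul_of_nonneg_right hAB hA0
    have e2 : ((1 + a) * B) * A ≤ ((1 + a) * B) * ((1 + a) * B) :=
      mul_le_mul_of_nonneg_left hAB (by positivity)
    have e4 : (1 + a) ^ 2 * B ^ 2 ≤ (1 + a) ^ 2 * (A * C) :=
      mul_le_mul_of_nonneg_left hCS (by positivity)
    have e5 : A * A ≤ ((1 + a) ^ 2 * C) * A := by nlinarith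
    exact le_of_mul_le_mul_right e5 hA
end

section
/- Bridge inequality relative to a reference matrix: Let ℓ : ℝ^n → ℝ be twice continuously differentiable, let M ≥ 0 be such that ∇²ℓ(y) ⪰ exp(−M ‖y − x‖₂) ∇²ℓ(x) for all x, y ∈ ℝ^n, let V ∈ ℝ^{n×n} be symmetric positive definite, and let κ > 0 be such that ∇²ℓ(w) ⪰ κ V for all w ∈ ℝ^n. Then for all w₁, w₂ ∈ ℝ^n, ‖w₁ − w₂‖²_V ≤ (1 + M ‖w₂ − w₁‖₂)² · κ^{-2} · ‖∇ℓ(w₁) − ∇ℓ(w₂)‖²_{V^{-1}}. -/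
open Matrix

lemma euclid_inner_eq_dot {n : ℕ} (x y : EuclideanSpace ℝ (Fin n)) :
    (inner ℝ x y : ℝ) = (WithLp.equiv 2 (Fin n → ℝ) x) ⬝ᵥ (WithLp.equiv 2 (Fin n → ℝ) y) := by
  simp [PiLp.inner_apply, dotProduct, RCLike.inner_apply, mul_comm]

lemma grad_inner {n : ℕ} (f : EuclideanSpace ℝ (Fin n) → ℝ) (x v : EuclideanSpace ℝ (Fin n)) :
    (inner ℝ (gradient f x) v : ℝ) = fderiv ℝ f x v := by
  rw [gradient]
  exact InnerProductSpace.toDual_symm_apply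

/-- **Bridge inequality relative to a reference matrix.**
If `ℓ : ℝ^n → ℝ` is `C²` and `M ≥ 0` satisfies the self-concordant-like
property `∇²ℓ(y) ⪰ exp(−M ‖y − x‖₂) ∇²ℓ(x)` (stated via quadratic forms),
`V` is symmetric positive definite, and `κ > 0` satisfies `∇²ℓ(w) ⪰ κ V`
for all `w` (again via quadratic forms), then for all `w₁, w₂`,
`‖w₁ − w₂‖²_V ≤ (1 + M ‖w₂ − w₁‖₂)² κ⁻² ‖∇ℓ(w₁) − ∇ℓ(w₂)‖²_{V⁻¹}`. -/
theorem bridge_reference_matrix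
    (n : ℕ) (ℓ : EuclideanSpace ℝ (Fin n) → ℝ) (hℓ : ContDiff ℝ 2 ℓ)
    (M : ℝ) (hM : 0 ≤ M)
    (hsc : ∀ x y v : EuclideanSpace ℝ (Fin n),
      Real.exp (-(M * ‖y - x‖)) * iteratedFDeriv ℝ 2 ℓ x ![v, v]
        ≤ iteratedFDeriv ℝ 2 ℓ y ![v, v])
    (V : Matrix (Fin n) (Fin n) ℝ) (hVpd : V.PosDef)
    (κ : ℝ) (hκ : 0 < κ)
    (hlow : ∀ (w v : EuclideanSpace ℝ (Fin n)),
      κ * ((WithLp.equiv 2 (Fin n → ℝ) v) ⬝ᵥ V.mulVec (WithLp.equiv 2 (Fin n → ℝ) v))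
        ≤ iteratedFDeriv ℝ 2 ℓ w ![v, v])
    (w₁ w₂ : EuclideanSpace ℝ (Fin n)) :
    (WithLp.equiv 2 (Fin n → ℝ) (w₁ - w₂))
        ⬝ᵥ V.mulVec (WithLp.equiv 2 (Fin n → ℝ) (w₁ - w₂))
      ≤ (1 + M * ‖w₂ - w₁‖) ^ 2 * κ⁻¹ ^ 2 *
        ((WithLp.equiv 2 (Fin n → ℝ) (gradient ℓ w₁ - gradient ℓ w₂))
          ⬝ᵥ V⁻¹.mulVec (WithLp.equiv 2 (Fin n → ℝ) (gradient ℓ w₁ - gradient ℓ w₂))) := by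
  classical
  set d : EuclideanSpace ℝ (Fin n) := w₁ - w₂ with hdd
  set g : EuclideanSpace ℝ (Fin n) := gradient ℓ w₁ - gradient ℓ w₂ with hgg
  set d' : Fin n → ℝ := WithLp.equiv 2 (Fin n → ℝ) d with hd'
  set g' : Fin n → ℝ := WithLp.equiv 2 (Fin n → ℝ) g with hg'
  set c0 : ℝ := d' ⬝ᵥ V.mulVec d' with hc0
  set G : ℝ := g' ⬝ᵥ V⁻¹.mulVec g' with hG
  have hVdet : IsUnit V.det := hVpd.det_pos.ne'.isUnit
  have hVt : Vᵀ = V := by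
    have := hVpd.1
    simpa [Matrix.IsHermitian, Matrix.conjTranspose_eq_transpose_of_trivial] using this
  -- Step A : κ * c0 ≤ d' ⬝ᵥ g'
  have hFd : Differentiable ℝ (fderiv ℝ ℓ) :=
    (hℓ.fderiv_right (m := 1) (by norm_num)).differentiable (by norm_num)
  have hφ : ∀ t : ℝ, HasDerivAt (fun t : ℝ => fderiv ℝ ℓ (w₂ + t • d) d)
      (iteratedFDeriv ℝ 2 ℓ (w₂ + t • d) ![d, d]) t := by
    intro t
    have hc : HasDerivAt (fun t : ℝ => w₂ + t • d) d t := by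
      simpa using ((hasDerivAt_id t).smul_const d).const_add w₂
    have h1' : HasDerivAt (fun t : ℝ => fderiv ℝ ℓ (w₂ + t • d))
        (fderiv ℝ (fderiv ℝ ℓ) (w₂ + t • d) d) t :=
      (hFd (w₂ + t • d)).hasFDerivAt.comp_hasDerivAt t hc
    have h2 := (ContinuousLinearMap.apply ℝ ℝ d).hasFDerivAt.comp_hasDerivAt t h1'
    rw [iteratedFDeriv_two_apply]
    exact h2
  have hψ : ∀ t : ℝ, HasDerivAt
      (fun t : ℝ => fderiv ℝ ℓ (w₂ + t • d) d - κ * c0 * t)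
      (iteratedFDeriv ℝ 2 ℓ (w₂ + t • d) ![d, d] - κ * c0) t := by
    intro t
    exact (hφ t).sub (by simpa using (hasDerivAt_id t).const_mul (κ * c0))
  have hmono : Monotone (fun t : ℝ => fderiv ℝ ℓ (w₂ + t • d) d - κ * c0 * t) := by
    apply monotone_of_deriv_nonneg (fun t => (hψ t).differentiableAt)
    intro t
    rw [(hψ t).deriv]
    have := hlow (w₂ + t • d) d
    linarith
  have hm01 := hmono (by norm_num : (0:ℝ) ≤ 1)
  have hd1 : w₂ + (1:ℝ) • d = w₁ := by
    rw [one_smul, hdd]; abel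
  have hd0 : w₂ + (0:ℝ) • d = w₂ := by simp
  have hA : κ * c0 ≤ d' ⬝ᵥ g' := by
    simp only [hd1, hd0] at hm01
    have hgd : d' ⬝ᵥ g' = fderiv ℝ ℓ w₁ d - fderiv ℝ ℓ w₂ d := by
      rw [dotProduct_comm, ← euclid_inner_eq_dot, hgg, inner_sub_left,
        grad_inner, grad_inner]
    rw [hgd]
    linarith
  -- Step B
  have hVg : V.mulVec (V⁻¹.mulVec g') = g' := by
    rw [Matrix.mulVec_mulVec, Matrix.mul_nonsing_inv _ hVdet, Matrix.one_mulVec]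
  have hsymm : ∀ x y : Fin n → ℝ, x ⬝ᵥ V.mulVec y = y ⬝ᵥ V.mulVec x := by
    intro x y
    rw [Matrix.dotProduct_mulVec, ← Matrix.mulVec_transpose, hVt, dotProduct_comm]
  set b : Fin n → ℝ := V⁻¹.mulVec g' with hb
  have hdVb : d' ⬝ᵥ V.mulVec b = d' ⬝ᵥ g' := by rw [hb, hVg]
  have hbVd : b ⬝ᵥ V.mulVec d' = d' ⬝ᵥ g' := by rw [hsymm b d', hdVb]
  have hbVb : b ⬝ᵥ V.mulVec b = G := by
    rw [hb, hVg, dotProduct_comm]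
  have hpos : (0:ℝ) ≤ (d' - κ⁻¹ • b) ⬝ᵥ V.mulVec (d' - κ⁻¹ • b) := by
    have := hVpd.posSemidef.re_dotProduct_nonneg (d' - κ⁻¹ • b)
    simpa using this
  have hexp : (d' - κ⁻¹ • b) ⬝ᵥ V.mulVec (d' - κ⁻¹ • b)
      = c0 - κ⁻¹ * (d' ⬝ᵥ g') - κ⁻¹ * (d' ⬝ᵥ g') + κ⁻¹ * (κ⁻¹ * G) := by
    simp only [Matrix.mulVec_sub, Matrix.mulVec_smul, sub_dotProduct,
      dotProduct_sub, smul_dotProduct, dotProduct_smul, smul_eq_mul]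
    rw [hdVb, hbVd, hbVb, hc0]
    ring
  have hGnn : (0:ℝ) ≤ G := by
    have := (hVpd.inv).posSemidef.re_dotProduct_nonneg g'
    simpa [hG] using this
  have hkey : c0 ≤ κ⁻¹ ^ 2 * G := by
    rw [hexp] at hpos
    have h2 : c0 ≤ κ⁻¹ * (d' ⬝ᵥ g') := by
      have h3 := mul_le_mul_of_nonneg_left hA (inv_nonneg.mpr hκ.le)
      calc c0 = κ⁻¹ * (κ * c0) := by field_simp
        _ ≤ _ := h3
    have h4 : c0 ≤ κ⁻¹ * (κ⁻¹ * G) := by linarith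
    rw [pow_two, mul_assoc]
    exact h4
  have hfac : (1:ℝ) ≤ (1 + M * ‖w₂ - w₁‖) ^ 2 := by
    nlinarith [norm_nonneg (w₂ - w₁), mul_nonneg hM (norm_nonneg (w₂ - w₁))]
  calc c0 ≤ κ⁻¹ ^ 2 * G := hkey
    _ ≤ (1 + M * ‖w₂ - w₁‖) ^ 2 * κ⁻¹ ^ 2 * G := by
        nlinarith [mul_nonneg (sq_nonneg κ⁻¹) hGnn]
end

section
/- From the generalized geometric condition, small loss implies quadratic proximity to the equivalence set: Let W ⊆ ℝ^n, let W* ⊆ W be nonempty, and let ℓ : W → ℝ satisfy ℓ(w) ≥ 0 for all w ∈ W and ℓ(w̃) = 0 for all w̃ ∈ W*. Let μ > 0, τ > 0 and 0 < γ < 2, and suppose that for every w ∈ W there exists w̃ ∈ W* such that min{ (μ/2) ‖w − w̃‖₂², (τ/2) ‖w − w̃‖₂^γ } ≤ ℓ(w). If ŵ ∈ W satisfies ℓ(ŵ) ≤ (τ/2) · (τ/μ)^{γ/(2−γ)}, then there exists w̃ ∈ W* with ‖ŵ − w̃‖₂² ≤ (2/μ) ℓ(ŵ); in particular inf_{w̃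 ∈ W*} ‖ŵ − w̃‖₂² ≤ (2/μ) ℓ(ŵ). -/
open Matrix

/-- **Small loss implies quadratic proximity to the equivalence set, under the
generalized geometric condition.**
Let `ℓ ≥ 0` on `W` vanish on a nonempty `W* ⊆ W`, let `μ, τ > 0` and
`0 < γ < 2`, and assume that for every `w ∈ W` there is `w̃ ∈ W*` with
`min{(μ/2)‖w − w̃‖², (τ/2)‖w − w̃‖^γ} ≤ ℓ(w)`. If `ŵ ∈ W` satisfies
`ℓ(ŵ) ≤ (τ/2)(τ/μ)^{γ/(2−γ)}`, then some `w̃ ∈ W*` has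
`‖ŵ − w̃‖² ≤ (2/μ) ℓ(ŵ)`; in particular
`inf_{w̃ ∈ W*} ‖ŵ − w̃‖² ≤ (2/μ) ℓ(ŵ)`. -/
theorem geometric_condition_small_loss_proximity
    (n : ℕ) (W Wstar : Set (EuclideanSpace ℝ (Fin n)))
    (hsub : Wstar ⊆ W) (hne : Wstar.Nonempty)
    (ℓ : EuclideanSpace ℝ (Fin n) → ℝ)
    (hnonneg : ∀ w ∈ W, 0 ≤ ℓ w) (hzero : ∀ w ∈ Wstar, ℓ w = 0)
    (μ τ γ : ℝ) (hμ : 0 < μ) (hτ : 0 < τ) (hγ0 : 0 < γ) (hγ2 : γ < 2)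
    (hgeom : ∀ w ∈ W, ∃ wt ∈ Wstar,
      min (μ / 2 * ‖w - wt‖ ^ 2) (τ / 2 * ‖w - wt‖ ^ γ) ≤ ℓ w)
    (what : EuclideanSpace ℝ (Fin n)) (hwhat : what ∈ W)
    (hsmall : ℓ what ≤ τ / 2 * (τ / μ) ^ (γ / (2 - γ))) :
    (∃ wt ∈ Wstar, ‖what - wt‖ ^ 2 ≤ 2 / μ * ℓ what) ∧
      sInf ((fun wt => ‖what - wt‖ ^ 2) '' Wstar) ≤ 2 / μ * ℓ what := by
  obtain ⟨wt, hwt, hmin⟩ := hgeom what hwhat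
  have hℓ0 : 0 ≤ ℓ what := hnonneg what hwhat
  set d : ℝ := ‖what - wt‖ with hd
  have hd0 : 0 ≤ d := norm_nonneg _
  have h2γ : 0 < 2 - γ := by linarith
  have key : d ^ 2 ≤ 2 / μ * ℓ what := by
    rcases min_le_iff.mp hmin with h | h
    · rw [div_mul_eq_mul_div, le_div_iff₀ hμ]
      nlinarith
    · -- τ/2 * d^γ ≤ ℓ what
      rcases eq_or_lt_of_le hd0 with hdz | hdpos
      · rw [← hdz]
        simpa using mul_nonneg (div_nonneg (by norm_num) hμ.le) hℓ0
      have hdγ : d ^ γ ≤ (τ / μ) ^ (γ / (2 - γ)) := by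
        have := h.trans hsmall
        nlinarith [this]
      have hdle : d ≤ (τ / μ) ^ (1 / (2 - γ)) := by
        have h1 : (d ^ γ) ^ (1 / γ) ≤ ((τ / μ) ^ (γ / (2 - γ))) ^ (1 / γ) :=
          Real.rpow_le_rpow (by positivity) hdγ (by positivity)
        have e1 : γ * (1 / γ) = 1 := by field_simp
        have e2 : γ / (2 - γ) * (1 / γ) = 1 / (2 - γ) := by
          field_simp
        rwa [← Real.rpow_mul hd0, ← Real.rpow_mul (by positivity), e1, e2,
          Real.rpow_one] at h1
      have hpow : d ^ (2 - γ) ≤ τ / μ := by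
        have h1 : d ^ (2 - γ) ≤ ((τ / μ) ^ (1 / (2 - γ))) ^ (2 - γ) :=
          Real.rpow_le_rpow hd0 hdle h2γ.le
        rwa [← Real.rpow_mul (by positivity), one_div,
          inv_mul_cancel₀ h2γ.ne', Real.rpow_one] at h1
      have hsplit : d ^ (2 : ℝ) = d ^ (2 - γ) * d ^ γ := by
        rw [← Real.rpow_add hdpos]; ring_nf
      have hstep : μ / 2 * d ^ 2 ≤ τ / 2 * d ^ γ := by
        have : d ^ (2 : ℕ) = d ^ (2 - γ) * d ^ γ := by
          rw [← hsplit, ← Real.rpow_natCast d 2]; norm_num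
        rw [this]
        have hdγpos : 0 < d ^ γ := Real.rpow_pos_of_pos hdpos γ
        calc μ / 2 * (d ^ (2 - γ) * d ^ γ) ≤ μ / 2 * ((τ / μ) * d ^ γ) := by
              apply mul_le_mul_of_nonneg_left (mul_le_mul_of_nonneg_right hpow hdγpos.le)
              positivity
          _ = τ / 2 * d ^ γ := by field_simp
        
      have h2 := hstep.trans h
      rw [div_mul_eq_mul_div, le_div_iff₀ hμ]
      nlinarith
  refine ⟨⟨wt, hwt, key⟩, ?_⟩
  have hb : BddBelow ((fun wt => ‖what - wt‖ ^ 2) '' Wstar) := by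
    refine ⟨0, ?_⟩
    rintro x ⟨y, -, rfl⟩
    positivity
  exact (csInf_le hb ⟨wt, hwt, rfl⟩).trans key
end

section
/- KL-divergence lower bound for MNL choice probabilities: Let K ≥ 1 and C > 0. For a ∈ ℝ^K define p₀(a) := 1/(1 + ∑_{j=1}^K exp(a_j)) and p_i(a) := exp(a_i)/(1 + ∑_{j=1}^K exp(a_j)) for i ∈ {1,…,K}, so that (p₀(a), p₁(a), …, p_K(a)) is a probability vector. Let κ₀ > 0 satisfy p_i(a) · p₀(a) ≥ κ₀ for every a with ‖a‖₂ ≤ C and every i ∈ {1,…,K}. Then for all u, v ∈ ℝ^K with ‖u‖₂ ≤ C and ‖v‖₂ ≤ C, ∑_{i=0}^K p_i(u) · log(p_i(u)/p_i(v)) ≥ (κ₀²/2) · ‖u − v‖₂². -/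
open Matrix

lemma taylor_aux (f f' f'' : ℝ → ℝ) (hf : ∀ t, HasDerivAt f (f' t) t)
    (hf' : ∀ t, HasDerivAt f' (f'' t) t) (c : ℝ)
    (hc : ∀ t ∈ Set.Icc (0:ℝ) 1, c ≤ f'' t) :
    c / 2 ≤ f' 1 - f 1 + f 0 := by
  set h : ℝ → ℝ := fun t => f t - f 1 - f' 1 * (t - 1) - c / 2 * (t - 1) ^ 2 with hh
  set g : ℝ → ℝ := fun t => f' t - f' 1 - c * (t - 1) with hg
  have hdh : ∀ t, HasDerivAt h (g t) t := by
    intro t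
    have h1 := (((hf t).sub_const (f 1)).sub
        (((hasDerivAt_id t).sub_const 1).const_mul (f' 1))).sub
        ((((hasDerivAt_id t).sub_const 1).pow 2).const_mul (c / 2))
    simp only [id_eq] at h1
    refine h1.congr_deriv ?_
    simp [hg]; ring
  have hdg : ∀ t, HasDerivAt g (f'' t - c) t := by
    intro t
    have h1 := ((hf' t).sub_const (f' 1)).sub
        (((hasDerivAt_id t).sub_const 1).const_mul c)
    simp only [id_eq] at h1
    refine h1.congr_deriv ?_
    ring
  have hgmono : MonotoneOn g (Set.Icc 0 1) := by
    apply monotoneOn_of_deriv_nonneg (convex_Icc 0 1)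
      (fun t _ => (hdg t).continuousAt.continuousWithinAt)
      (fun t _ => (hdg t).differentiableAt.differentiableWithinAt)
    intro t ht
    rw [interior_Icc] at ht
    rw [(hdg t).deriv]
    have := hc t ⟨le_of_lt ht.1, le_of_lt ht.2⟩
    linarith
  have hgle : ∀ t ∈ Set.Icc (0:ℝ) 1, g t ≤ 0 := by
    intro t ht
    have := hgmono ht (Set.mem_Icc.mpr ⟨zero_le_one, le_refl 1⟩) ht.2
    simpa [hg] using this
  have hhanti : AntitoneOn h (Set.Icc 0 1) := by
    apply antitoneOn_of_deriv_nonpos (convex_Icc 0 1)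
      (fun t _ => (hdh t).continuousAt.continuousWithinAt)
      (fun t _ => (hdh t).differentiableAt.differentiableWithinAt)
    intro t ht
    rw [interior_Icc] at ht
    rw [(hdh t).deriv]
    exact hgle t ⟨le_of_lt ht.1, le_of_lt ht.2⟩
  have h01 : h 1 ≤ h 0 := hhanti (Set.mem_Icc.mpr ⟨le_refl 0, zero_le_one⟩)
      (Set.mem_Icc.mpr ⟨zero_le_one, le_refl 1⟩) zero_le_one
  simp only [hh] at h01
  nlinarith [h01]

lemma div_alg_aux (a b sS : ℝ) (hS : sS ≠ 0) :
    (a * sS - b * b) / sS ^ 2 = a / sS - (b / sS) ^ 2 := by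
  field_simp

set_option maxHeartbeats 1000000 in
/-- **KL-divergence lower bound for MNL choice probabilities.**
For `a ∈ ℝ^K` let `p₀(a) = 1/(1 + ∑_j exp(a_j))` and
`p_i(a) = exp(a_i)/(1 + ∑_j exp(a_j))`. If `κ₀ > 0` satisfies
`p_i(a) p₀(a) ≥ κ₀` on the ball of radius `C`, then for all `u, v` in that
ball the KL divergence between the induced distributions on `{0, 1, …, K}`
is at least `(κ₀²/2) ‖u − v‖₂²`. -/
theorem mnl_kl_lower_bound
    (K : ℕ) (hK : 1 ≤ K) (C : ℝ) (hC : 0 < C)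
    (p0 : EuclideanSpace ℝ (Fin K) → ℝ)
    (p : EuclideanSpace ℝ (Fin K) → Fin K → ℝ)
    (hp0 : ∀ a, p0 a = 1 / (1 + ∑ j, Real.exp (a j)))
    (hp : ∀ a i, p a i = Real.exp (a i) / (1 + ∑ j, Real.exp (a j)))
    (κ₀ : ℝ) (hκpos : 0 < κ₀)
    (hκ : ∀ a : EuclideanSpace ℝ (Fin K), ‖a‖ ≤ C → ∀ i, κ₀ ≤ p a i * p0 a)
    (u v : EuclideanSpace ℝ (Fin K)) (hu : ‖u‖ ≤ C) (hv : ‖v‖ ≤ C) :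
    κ₀ ^ 2 / 2 * ‖u - v‖ ^ 2
      ≤ p0 u * Real.log (p0 u / p0 v) + ∑ i, p u i * Real.log (p u i / p v i) := by
  classical
  set e : Fin K → ℝ := fun j => u j - v j with he
  set S : ℝ → ℝ := fun t => 1 + ∑ j, Real.exp (v j + t * e j) with hSdef
  set B : ℝ → ℝ := fun t => ∑ j, e j * Real.exp (v j + t * e j) with hBdef
  set A : ℝ → ℝ := fun t => ∑ j, e j ^ 2 * Real.exp (v j + t * e j) with hAdef
  have hSpos : ∀ t, 0 < S t := by
    intro t
    simp only [hSdef]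
    positivity
  -- derivatives
  have hSd : ∀ t, HasDerivAt S (B t) t := by
    intro t
    have hsum : HasDerivAt (fun t => ∑ j, Real.exp (v j + t * e j)) (B t) t := by
      rw [hBdef]
      apply HasDerivAt.fun_sum
      intro j _
      have h1 : HasDerivAt (fun t : ℝ => v j + t * e j) (e j) t := by
        simpa using ((hasDerivAt_id t).mul_const (e j)).const_add (v j)
      simpa [mul_comm] using h1.exp
    simpa [hSdef] using hsum.const_add 1
  have hBd : ∀ t, HasDerivAt B (A t) t := by
    intro t
    rw [hAdef, hBdef]
    apply HasDerivAt.fun_sum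
    intro j _
    have h1 : HasDerivAt (fun t : ℝ => v j + t * e j) (e j) t := by
      simpa using ((hasDerivAt_id t).mul_const (e j)).const_add (v j)
    have h2 := h1.exp.const_mul (e j)
    refine h2.congr_deriv ?_
    ring
  set F : ℝ → ℝ := fun t => Real.log (S t) with hFdef
  set F' : ℝ → ℝ := fun t => B t / S t with hF'def
  set F'' : ℝ → ℝ := fun t => (A t * S t - B t * B t) / S t ^ 2 with hF''def
  have hF : ∀ t, HasDerivAt F (F' t) t := fun t => (hSd t).log (hSpos t).ne'
  have hF' : ∀ t, HasDerivAt F' (F'' t) t := fun t => (hBd t).div (hSd t) (hSpos t).ne'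
  -- Hessian lower bound
  set c : ℝ := κ₀ * ∑ j, e j ^ 2 with hcdef
  have hc : ∀ t ∈ Set.Icc (0:ℝ) 1, c ≤ F'' t := by
    intro t ht
    set a : EuclideanSpace ℝ (Fin K) := v + t • (u - v) with hadef
    have haj : ∀ j, a j = v j + t * e j := by
      intro j
      simp [hadef, he, PiLp.add_apply, PiLp.smul_apply, PiLp.sub_apply]
    have hanorm : ‖a‖ ≤ C := by
      have hrw : a = (1 - t) • v + t • u := by rw [hadef]; module
      rw [hrw]
      calc ‖(1 - t) • v + t • u‖ ≤ ‖(1 - t) • v‖ + ‖t • u‖ := norm_add_le _ _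
        _ = (1 - t) * ‖v‖ + t * ‖u‖ := by
            rw [norm_smul, norm_smul, Real.norm_eq_abs, Real.norm_eq_abs,
              abs_of_nonneg (by linarith [ht.2] : (0:ℝ) ≤ 1 - t), abs_of_nonneg ht.1]
        _ ≤ (1 - t) * C + t * C := by
            have h1 : (0:ℝ) ≤ 1 - t := by linarith [ht.2]
            have := ht.1
            gcongr
        _ = C := by ring
    have hSa : S t = 1 + ∑ j, Real.exp (a j) := by
      rw [show (∑ j, Real.exp (a j)) = ∑ j, Real.exp (v j + t * e j) from
        Finset.sum_congr rfl fun j _ => by rw [haj j]]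
    have hqκ : ∀ i, κ₀ ≤ Real.exp (v i + t * e i) / S t * (1 / S t) := by
      intro i
      have := hκ a hanorm i
      rw [hp, hp0, ← hSa, haj i] at this
      exact this
    -- Cauchy-Schwarz
    set q : Fin K → ℝ := fun j => Real.exp (v j + t * e j) / S t with hqdef
    have hq0 : ∀ j, 0 ≤ q j := fun j => div_nonneg (Real.exp_pos _).le (hSpos t).le
    have hCS : (∑ j, e j * q j) ^ 2 ≤ (∑ j, q j) * ∑ j, e j ^ 2 * q j := by
      have h := Finset.sum_mul_sq_le_sq_mul_sq Finset.univ
        (fun j => Real.sqrt (q j)) (fun j => Real.sqrt (q j) * e j)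
      have h1 : ∀ j : Fin K, Real.sqrt (q j) * (Real.sqrt (q j) * e j) = e j * q j := by
        intro j
        rw [← mul_assoc, Real.mul_self_sqrt (hq0 j)]
        ring
      have h2 : ∀ j : Fin K, Real.sqrt (q j) ^ 2 = q j := fun j => Real.sq_sqrt (hq0 j)
      have h3 : ∀ j : Fin K, (Real.sqrt (q j) * e j) ^ 2 = e j ^ 2 * q j := by
        intro j
        rw [mul_pow, h2 j]
        ring
      calc (∑ j, e j * q j) ^ 2 = (∑ j, Real.sqrt (q j) * (Real.sqrt (q j) * e j)) ^ 2 := by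
            rw [Finset.sum_congr rfl fun j _ => (h1 j)]
        _ ≤ (∑ j, Real.sqrt (q j) ^ 2) * ∑ j, (Real.sqrt (q j) * e j) ^ 2 := h
        _ = (∑ j, q j) * ∑ j, e j ^ 2 * q j := by
            rw [Finset.sum_congr rfl fun j _ => (h2 j), Finset.sum_congr rfl fun j _ => (h3 j)]
    have hsumq : ∑ j, q j = 1 - 1 / S t := by
      rw [hqdef]
      rw [← Finset.sum_div]
      have : ∑ j, Real.exp (v j + t * e j) = S t - 1 := by rw [hSdef]; ring
      rw [this, sub_div, div_self (hSpos t).ne']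
    have hBS : B t / S t = ∑ j, e j * q j := by
      simp only [hBdef, hqdef]
      rw [Finset.sum_div]
      exact Finset.sum_congr rfl fun j _ => (mul_div_assoc _ _ _)
    have hAS : A t / S t = ∑ j, e j ^ 2 * q j := by
      simp only [hAdef, hqdef]
      rw [Finset.sum_div]
      exact Finset.sum_congr rfl fun j _ => (mul_div_assoc _ _ _)
    have hlow : κ₀ * ∑ j, e j ^ 2 ≤ (1 / S t) * ∑ j, e j ^ 2 * q j := by
      rw [Finset.mul_sum, Finset.mul_sum]
      apply Finset.sum_le_sum
      intro j _
      have := hqκ j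
      have hq : κ₀ ≤ q j * (1 / S t) := by rw [hqdef]; exact this
      calc κ₀ * e j ^ 2 ≤ (q j * (1 / S t)) * e j ^ 2 := by
            nlinarith [sq_nonneg (e j)]
        _ = 1 / S t * (e j ^ 2 * q j) := by ring
    have hFeq : F'' t = A t / S t - (B t / S t) ^ 2 := by
      simp only [hF''def]
      exact div_alg_aux _ _ _ (hSpos t).ne'
    rw [hFeq, hcdef, hBS, hAS]
    have hAq0 : 0 ≤ ∑ j, e j ^ 2 * q j := by
      apply Finset.sum_nonneg
      intro j _
      exact mul_nonneg (sq_nonneg _) (hq0 j)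
    calc κ₀ * ∑ j, e j ^ 2 ≤ (1 / S t) * ∑ j, e j ^ 2 * q j := hlow
      _ = (∑ j, e j ^ 2 * q j) - (1 - 1 / S t) * ∑ j, e j ^ 2 * q j := by ring
      _ ≤ (∑ j, e j ^ 2 * q j) - (∑ j, e j * q j) ^ 2 := by
          rw [← hsumq]
          linarith [hCS]
  -- Apply the Taylor lemma
  have main := taylor_aux F F' F'' hF hF' c hc
  -- Identify the RHS of the goal with F' 1 - F 1 + F 0
  have hSu : S 1 = 1 + ∑ j, Real.exp (u j) := by
    simp only [hSdef]
    congr 1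
    apply Finset.sum_congr rfl
    intro j _
    congr 1
    simp [he]
  have hSv : S 0 = 1 + ∑ j, Real.exp (v j) := by
    simp only [hSdef]
    congr 1
    apply Finset.sum_congr rfl
    intro j _
    congr 1
    simp
  have hB1 : B 1 = ∑ j, e j * Real.exp (u j) := by
    simp only [hBdef]
    apply Finset.sum_congr rfl
    intro j _
    congr 1
    simp [he]
  have hSu_pos : 0 < S 1 := hSpos 1
  have hSv_pos : 0 < S 0 := hSpos 0
  have hRHS : p0 u * Real.log (p0 u / p0 v) + ∑ i, p u i * Real.log (p u i / p v i)
      = F' 1 - F 1 + F 0 := by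
    have hlog0 : Real.log (p0 u / p0 v) = Real.log (S 0) - Real.log (S 1) := by
      rw [hp0, hp0, ← hSu, ← hSv]
      rw [Real.log_div (by positivity) (by positivity),
        Real.log_div one_ne_zero hSu_pos.ne',
        Real.log_div one_ne_zero hSv_pos.ne', Real.log_one]
      ring
    have hlogi : ∀ i, Real.log (p u i / p v i)
        = (u i - v i) + (Real.log (S 0) - Real.log (S 1)) := by
      intro i
      rw [hp, hp, ← hSu, ← hSv]
      rw [div_div_div_comm,
        Real.log_div (by positivity) (by positivity),
        Real.log_div (Real.exp_pos _).ne' (Real.exp_pos _).ne',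
        Real.log_div hSu_pos.ne' hSv_pos.ne', Real.log_exp, Real.log_exp]
      ring
    rw [hlog0]
    rw [Finset.sum_congr rfl fun i _ => by rw [hlogi i, hp]]
    rw [hp0, ← hSu]
    have hsum_exp : ∑ j, Real.exp (u j) = S 1 - 1 := by rw [hSu]; ring
    have hexpand : ∑ i, Real.exp (u i) / S 1 * ((u i - v i) + (Real.log (S 0) - Real.log (S 1)))
        = B 1 / S 1 + (Real.log (S 0) - Real.log (S 1)) * ((S 1 - 1) / S 1) := by
      rw [hB1, Finset.sum_div, ← hsum_exp, Finset.sum_div, Finset.mul_sum,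
        ← Finset.sum_add_distrib]
      apply Finset.sum_congr rfl
      intro i _
      simp only [he]
      ring
    simp only [hexpand, hF'def, hFdef]
    have key : (1:ℝ) / S 1 + (S 1 - 1) / S 1 = 1 := by
      rw [← add_div]
      rw [show (1:ℝ) + (S 1 - 1) = S 1 by ring]
      exact div_self hSu_pos.ne'
    linear_combination (Real.log (S 0) - Real.log (S 1)) * key
  rw [hRHS]
  -- norm identity
  have hnorm : ‖u - v‖ ^ 2 = ∑ j, e j ^ 2 := by
    rw [EuclideanSpace.norm_eq, Real.sq_sqrt (by positivity)]
    apply Finset.sum_congr rfl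
    intro j _
    simp [he, PiLp.sub_apply, sq_abs]
  -- κ₀ ≤ 1
  have hκ1 : κ₀ ≤ 1 := by
    have h := hκ u hu ⟨0, hK⟩
    rw [hp, hp0] at h
    set Su := 1 + ∑ j, Real.exp (u j) with hSudef
    have hSupos : 0 < Su := by positivity
    have hexp_le : Real.exp (u ⟨0, hK⟩) ≤ Su := by
      have h1 : Real.exp (u ⟨0, hK⟩) ≤ ∑ j, Real.exp (u j) :=
        Finset.single_le_sum (fun j _ => (Real.exp_pos _).le) (Finset.mem_univ _)
      linarith
    have h1Su : 1 ≤ Su := by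
      have : (0:ℝ) ≤ ∑ j, Real.exp (u j) :=
        Finset.sum_nonneg fun j _ => (Real.exp_pos _).le
      linarith
    calc κ₀ ≤ Real.exp (u ⟨0, hK⟩) / Su * (1 / Su) := h
      _ ≤ 1 := by
        rw [div_mul_div_comm, mul_one, div_le_one (by positivity)]
        nlinarith
  have hN : 0 ≤ ∑ j, e j ^ 2 := Finset.sum_nonneg fun j _ => sq_nonneg _
  calc κ₀ ^ 2 / 2 * ‖u - v‖ ^ 2 = κ₀ ^ 2 / 2 * ∑ j, e j ^ 2 := by rw [hnorm]
    _ ≤ κ₀ / 2 * ∑ j, e j ^ 2 := by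
        nlinarith [mul_nonneg (mul_nonneg hκpos.le (by linarith : (0:ℝ) ≤ 1 - κ₀)) hN]
    _ = c / 2 := by rw [hcdef]; ring
    _ ≤ F' 1 - F 1 + F 0 := main
end
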